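/- arXiv:2404.18823 — 6 statements merged into one kernel-verified Lean document; each statement's English description precedes it below -/
import Mathlib

section
/- Generalized Riemann–Lebesgue lemma with radial phase: for every integrable function f : ℝ^d → ℂ, the integral ∫_{ℝ^d} e^{i t |ξ|} f(ξ) dξ tends to 0 as |t| → ∞ (t real, i.e. along the cocompact filter on ℝ). -/
open MeasureTheory Filter Set Metric
open scoped Real

/-- **Generalized Riemann–Lebesgue lemma with radial phase.** For every integrable
function `f : ℝ^d → ℂ`, the integral `∫ e^{i t |ξ|} f ξ dξ` tends to `0` as `|t| → ∞`. -/
theorem generalized_riemann_lebesgue_radial (d : ℕ) (hd : 1 ≤ d)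
    (f : EuclideanSpace ℝ (Fin d) → ℂ) (hf : Integrable f) :
    Tendsto (fun t : ℝ => ∫ ξ, Complex.exp (Complex.I * (t : ℂ) * (‖ξ‖ : ℂ)) * f ξ)
      (cocompact ℝ) (nhds 0) := by
  haveI : Nontrivial (EuclideanSpace ℝ (Fin d)) := Module.nontrivial_of_finrank_pos (R := ℝ)
    (by rw [finrank_euclideanSpace_fin]; omega)
  set μ : Measure (EuclideanSpace ℝ (Fin d)) := volume with hμ
  set n : ℕ := Module.finrank ℝ (EuclideanSpace ℝ (Fin d)) - 1 with hn
  set S : ℝ → ℂ :=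
    fun r => ∫ ω : sphere (0 : EuclideanSpace ℝ (Fin d)) 1, f (r • (ω : EuclideanSpace ℝ (Fin d)))
      ∂μ.toSphere with hS
  set g : ℝ → ℂ := Set.indicator (Ioi (0 : ℝ)) (fun r => (r ^ n : ℝ) • S r) with hg
  have key : ∀ t : ℝ, (∫ ξ, Complex.exp (Complex.I * (t : ℂ) * (‖ξ‖ : ℂ)) * f ξ ∂μ)
      = ∫ r : ℝ, Complex.exp (Complex.I * (t : ℂ) * (r : ℂ)) * g r := by
    intro t
    set φ : EuclideanSpace ℝ (Fin d) → ℂ :=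
      fun x => Complex.exp (Complex.I * (t : ℂ) * (‖x‖ : ℂ)) * f x with hφ
    have hexp_norm : ∀ r : ℝ, ‖Complex.exp (Complex.I * (t : ℂ) * (r : ℂ))‖ = 1 := by
      intro r
      have : Complex.I * (t : ℂ) * (r : ℂ) = ((t * r : ℝ) : ℂ) * Complex.I := by
        push_cast; ring
      rw [this, Complex.norm_exp_ofReal_mul_I]
    have hφi : Integrable φ μ := by
      refine hf.bdd_mul (c := 1) ?_ (Filter.Eventually.of_forall fun x => (hexp_norm ‖x‖).le)
      exact (Complex.continuous_exp.comp (by fun_prop)).aestronglyMeasurable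
    have hs0 : MeasurableSet ({0}ᶜ : Set (EuclideanSpace ℝ (Fin d))) :=
      (measurableSet_singleton 0).compl
    have hcomap : Integrable (fun x : ({0}ᶜ : Set (EuclideanSpace ℝ (Fin d))) => φ x)
        (μ.comap (↑)) := by
      rw [show (fun x : ({0}ᶜ : Set (EuclideanSpace ℝ (Fin d))) => φ ↑x) = φ ∘ (↑) from rfl,
        ← (MeasurableEmbedding.subtype_coe hs0).integrable_map_iff,
        map_comap_subtype_coe hs0]
      exact hφi.integrableOn
    set G : sphere (0 : EuclideanSpace ℝ (Fin d)) 1 × Ioi (0 : ℝ) → ℂ :=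
      fun p => φ ((homeomorphUnitSphereProd (EuclideanSpace ℝ (Fin d))).symm p) with hG
    have hmp := μ.measurePreserving_homeomorphUnitSphereProd
    have hGcomp : (G ∘ (homeomorphUnitSphereProd (EuclideanSpace ℝ (Fin d))))
        = fun x : ({0}ᶜ : Set (EuclideanSpace ℝ (Fin d))) => φ x := by
      funext x
      have hx : ‖(x : EuclideanSpace ℝ (Fin d))‖ ≠ 0 :=
        norm_ne_zero_iff.2 (Set.mem_compl_singleton_iff.1 x.2)
      simp [hG, smul_inv_smul₀ hx]
    have hGint : Integrable G (μ.toSphere.prod (Measure.volumeIoiPow n)) := by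
      rw [← hmp.integrable_comp_emb (Homeomorph.measurableEmbedding _), hGcomp]
      exact hcomap
    calc ∫ x, φ x ∂μ
        = ∫ x : ({0}ᶜ : Set (EuclideanSpace ℝ (Fin d))), φ x ∂(μ.comap (↑)) := by
          rw [integral_subtype_comap hs0 φ, restrict_compl_singleton]
      _ = ∫ p, G p ∂(μ.toSphere.prod (Measure.volumeIoiPow n)) := by
          rw [← hmp.integral_comp (Homeomorph.measurableEmbedding _) G]
          exact integral_congr_ae (Filter.Eventually.of_forall fun x =>
            (congrFun hGcomp x).symm)
      _ = ∫ r : Ioi (0 : ℝ), ∫ ω, G (ω, r) ∂μ.toSphere ∂(Measure.volumeIoiPow n) :=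
          integral_prod_symm G hGint
      _ = ∫ r : Ioi (0 : ℝ), Complex.exp (Complex.I * (t : ℂ) * ((r : ℝ) : ℂ)) * S (r : ℝ)
            ∂(Measure.volumeIoiPow n) := by
          refine integral_congr_ae (Filter.Eventually.of_forall fun r => ?_)
          have hnorm : ∀ ω : sphere (0 : EuclideanSpace ℝ (Fin d)) 1,
              ‖(r : ℝ) • (ω : EuclideanSpace ℝ (Fin d))‖ = (r : ℝ) := by
            intro ω
            rw [norm_smul, mem_sphere_zero_iff_norm.1 ω.2, mul_one,
              Real.norm_eq_abs, abs_of_pos r.2]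
          simp only [hG, hφ, homeomorphUnitSphereProd_symm_apply_coe, hnorm]
          rw [integral_const_mul]
      _ = ∫ r in Ioi (0 : ℝ),
            Real.toNNReal (r ^ n) • (Complex.exp (Complex.I * (t : ℂ) * (r : ℂ)) * S r) := by
          simp only [Measure.volumeIoiPow, ENNReal.ofReal]
          rw [integral_withDensity_eq_integral_smul
            ((measurable_subtype_coe.pow_const _).real_toNNReal),
            integral_subtype_comap measurableSet_Ioi
              (fun r : ℝ => Real.toNNReal (r ^ n) •
                (Complex.exp (Complex.I * (t : ℂ) * (r : ℂ)) * S r))]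
      _ = ∫ r : ℝ, Complex.exp (Complex.I * (t : ℂ) * (r : ℂ)) * g r := by
          rw [hg]
          have : (fun r : ℝ => Complex.exp (Complex.I * (t : ℂ) * (r : ℂ)) *
              Set.indicator (Ioi (0 : ℝ)) (fun r => (r ^ n : ℝ) • S r) r)
              = Set.indicator (Ioi (0 : ℝ))
                (fun r => Complex.exp (Complex.I * (t : ℂ) * (r : ℂ)) * ((r ^ n : ℝ) • S r)) := by
            funext r
            by_cases hr : r ∈ Ioi (0 : ℝ) <;> simp [hr]
          rw [this, MeasureTheory.integral_indicator measurableSet_Ioi]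
          refine (setIntegral_congr_fun measurableSet_Ioi fun r hr => ?_).symm
          rw [NNReal.smul_def, Real.coe_toNNReal _ (pow_nonneg (le_of_lt hr) _),
            mul_smul_comm]
  simp only [key]
  have H := Real.tendsto_integral_exp_smul_cocompact g
  set h : ℝ ≃ₜ ℝ := Homeomorph.mulLeft₀ ((-(2 * π))⁻¹)
    (inv_ne_zero (neg_ne_zero.2 (by positivity : (0:ℝ) < 2 * π).ne')) with hh
  have hco : Tendsto h (cocompact ℝ) (cocompact ℝ) := h.map_cocompact.le
  refine (H.comp hco).congr fun t => ?_
  refine integral_congr_ae (Filter.Eventually.of_forall fun v => ?_)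
  have hπ : (π : ℝ) ≠ 0 := Real.pi_ne_zero
  have harg : (2 * π * (-(v * (h t))) : ℝ) = v * t := by
    rw [show h t = (-(2 * π))⁻¹ * t from rfl]
    field_simp
  show (Real.fourierChar (-(v * h t)) : ℂ) * g v = Complex.exp (Complex.I * (t : ℂ) * (v : ℂ)) * g v
  rw [Real.fourierChar_apply, harg]
  congr 1
  push_cast
  ring_nf
end

section
/- First-order Riemann–Lebesgue decay of radial trigonometric multipliers: for every integrable function f : ℝ^d → ℂ, both ∫_{ℝ^d} cos(t |ξ|) f(ξ) dξ → 0 and ∫_{ℝ^d} sin(t |ξ|) f(ξ) dξ → 0 as |t| → ∞ (t real). -/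
open MeasureTheory Filter Set Metric Complex
open scoped ENNReal NNReal Real FourierTransform

/-- Preimage of a Lebesgue-null set under the norm map is null (d ≥ 1). -/
lemma rtl_norm_preimage_null (d : ℕ) (hd : 1 ≤ d) {A : Set ℝ} (hA : MeasurableSet A)
    (hA0 : volume A = 0) :
    volume ((fun ξ : EuclideanSpace ℝ (Fin d) => ‖ξ‖) ⁻¹' A) = 0 := by
  haveI : Nonempty (Fin d) := ⟨⟨0, hd⟩⟩
  let E := EuclideanSpace ℝ (Fin d)
  haveI : Nontrivial E := inferInstance
  set μ : Measure E := volume with hμ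
  have hmp := μ.measurePreserving_homeomorphUnitSphereProd
  set B : Set (Ioi (0 : ℝ)) := Subtype.val ⁻¹' A with hB
  have hBmeas : MeasurableSet B := hA.preimage measurable_subtype_coe
  have hsub : (fun ξ : E => ‖ξ‖) ⁻¹' A ⊆
      {0} ∪ Subtype.val '' ((homeomorphUnitSphereProd E) ⁻¹' (univ ×ˢ B)) := by
    intro x hx
    by_cases h0 : x = 0
    · exact Or.inl h0
    · refine Or.inr ⟨⟨x, h0⟩, ?_, rfl⟩
      simp only [Set.mem_preimage, Set.mem_prod, Set.mem_univ, true_and]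
      simpa [hB] using hx
  refine measure_mono_null hsub (measure_union_null (measure_singleton _) ?_)
  rw [← comap_subtype_coe_apply (measurableSet_singleton (0 : E)).compl]
  rw [hmp.measure_preimage ((MeasurableSet.univ.prod hBmeas).nullMeasurableSet)]
  rw [Measure.prod_prod]
  have hB0 : Measure.volumeIoiPow (Module.finrank ℝ E - 1) B = 0 := by
    rw [Measure.volumeIoiPow, withDensity_apply _ hBmeas]
    refine setLIntegral_measure_zero _ _ ?_
    rw [comap_subtype_coe_apply measurableSet_Ioi]
    refine measure_mono_null ?_ hA0
    rintro r ⟨s, hs, rfl⟩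
    exact hs
  rw [hB0, mul_zero]

/-- Key oscillatory decay for a nonnegative density. -/
lemma rtl_keyExp_nnreal (d : ℕ) (hd : 1 ≤ d) (g : EuclideanSpace ℝ (Fin d) → ℝ≥0)
    (hgm : Measurable g) (hgi : Integrable (fun ξ => (g ξ : ℝ))) :
    Tendsto (fun t : ℝ => ∫ ξ, (g ξ : ℝ) •
        Complex.exp ((t * ‖ξ‖ : ℝ) * Complex.I)) (cocompact ℝ) (nhds 0) := by
  let E := EuclideanSpace ℝ (Fin d)
  set μg : Measure E := volume.withDensity (fun ξ => (g ξ : ℝ≥0∞)) with hμg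
  have hlint : ∫⁻ ξ, (g ξ : ℝ≥0∞) ∂(volume : Measure E) < ∞ := by
    have := hgi.hasFiniteIntegral
    simpa [HasFiniteIntegral] using this
  haveI : IsFiniteMeasure μg := isFiniteMeasure_withDensity hlint.ne
  set ν : Measure ℝ := μg.map (fun ξ : E => ‖ξ‖) with hν
  haveI : IsFiniteMeasure ν := by
    rw [hν]; exact Measure.isFiniteMeasure_map μg _
  have hac : ν ≪ (volume : Measure ℝ) := by
    refine Measure.AbsolutelyContinuous.mk (fun s hs hs0 => ?_)
    rw [hν, Measure.map_apply (measurable_norm) hs, hμg,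
      withDensity_apply _ (hs.preimage measurable_norm)]
    exact setLIntegral_measure_zero _ _ (rtl_norm_preimage_null d hd hs hs0)
  -- Radon–Nikodym
  set h : ℝ → ℝ≥0∞ := ν.rnDeriv volume with hh
  have hwd : volume.withDensity h = ν := Measure.withDensity_rnDeriv_eq ν volume hac
  have hmeas_h : Measurable h := Measure.measurable_rnDeriv ν volume
  have hfin : ∫⁻ r, h r ∂volume < ∞ := Measure.lintegral_rnDeriv_lt_top ν volume
  set H : ℝ → ℝ≥0 := fun r => (h r).toNNReal with hH
  have hmeas_H : Measurable H := hmeas_h.ennreal_toNNReal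
  have hae : (fun r => ((H r : ℝ≥0∞))) =ᵐ[volume] h := by
    filter_upwards [ae_lt_top hmeas_h hfin.ne] with r hr
    exact ENNReal.coe_toNNReal hr.ne
  have hwd' : volume.withDensity (fun r => ((H r : ℝ≥0∞))) = ν := by
    rw [withDensity_congr_ae hae, hwd]
  -- rewrite the integral
  have key : ∀ t : ℝ, ∫ ξ, (g ξ : ℝ) • Complex.exp ((t * ‖ξ‖ : ℝ) * Complex.I)
      = ∫ r : ℝ, (H r : ℝ) • Complex.exp ((t * r : ℝ) * Complex.I) := by
    intro t
    have e_cont : Continuous (fun r : ℝ => Complex.exp ((t * r : ℝ) * Complex.I)) := by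
      fun_prop
    calc ∫ ξ, (g ξ : ℝ) • Complex.exp ((t * ‖ξ‖ : ℝ) * Complex.I)
        = ∫ ξ, Complex.exp ((t * ‖ξ‖ : ℝ) * Complex.I) ∂μg := by
          rw [hμg, integral_withDensity_eq_integral_smul hgm]
          simp only [NNReal.smul_def]
      _ = ∫ r : ℝ, Complex.exp ((t * r : ℝ) * Complex.I) ∂ν := by
          rw [hν, integral_map measurable_norm.aemeasurable e_cont.aestronglyMeasurable]
      _ = ∫ r : ℝ, Complex.exp ((t * r : ℝ) * Complex.I)
            ∂(volume.withDensity (fun r => ((H r : ℝ≥0∞)))) := by rw [hwd']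
      _ = ∫ r : ℝ, (H r : ℝ) • Complex.exp ((t * r : ℝ) * Complex.I) := by
          rw [integral_withDensity_eq_integral_smul hmeas_H]
          simp only [NNReal.smul_def]
  simp only [funext key]
  -- Riemann–Lebesgue in 1D
  set Hc : ℝ → ℂ := fun r => ((H r : ℝ) : ℂ) with hHc
  have hRL : Tendsto (𝓕 Hc) (cocompact ℝ) (nhds 0) :=
    Real.zero_at_infty_fourier Hc
  have hcomp : Tendsto (fun t : ℝ => -t / (2 * Real.pi)) (cocompact ℝ) (cocompact ℝ) := by
    have hc : (-(2 * Real.pi)⁻¹ : ℝ) ≠ 0 :=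
      neg_ne_zero.mpr (inv_ne_zero (by positivity))
    have h2 := (Homeomorph.mulLeft₀ (-(2 * Real.pi)⁻¹ : ℝ) hc).isClosedEmbedding.tendsto_cocompact
    have : (fun t : ℝ => -t / (2 * Real.pi))
        = fun t : ℝ => (Homeomorph.mulLeft₀ (-(2 * Real.pi)⁻¹ : ℝ) hc) t := by
      funext t
      simp [Homeomorph.mulLeft₀]
      ring
    rw [this]
    exact h2
  have heq : (fun t : ℝ => ∫ r : ℝ, (H r : ℝ) • Complex.exp ((t * r : ℝ) * Complex.I))
      = fun t : ℝ => 𝓕 Hc (-t / (2 * Real.pi)) := by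
    funext t
    rw [Real.fourier_real_eq_integral_exp_smul]
    refine integral_congr_ae (Eventually.of_forall fun r => ?_)
    have harg : (-2 * Real.pi * r * (-t / (2 * Real.pi)) : ℝ) = t * r := by
      field_simp
    show (H r : ℝ) • Complex.exp ((t * r : ℝ) * Complex.I)
        = Complex.exp (((-2 * Real.pi * r * (-t / (2 * Real.pi)) : ℝ)) * Complex.I) • Hc r
    rw [harg, hHc]
    rw [Complex.real_smul, smul_eq_mul]
    ring
  rw [heq]
  exact hRL.comp hcomp

private lemma rtl_toNNReal_sub (r : ℝ) :
    (r.toNNReal : ℝ) - ((-r).toNNReal : ℝ) = r := by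
  rcases le_total 0 r with h | h
  · rw [Real.coe_toNNReal _ h, Real.toNNReal_of_nonpos (neg_nonpos.mpr h)]
    simp
  · rw [Real.toNNReal_of_nonpos h, Real.coe_toNNReal _ (neg_nonneg.mpr h)]
    simp

/-- Oscillatory decay for a general integrable complex function. -/
lemma rtl_keyExp (d : ℕ) (hd : 1 ≤ d) (f : EuclideanSpace ℝ (Fin d) → ℂ)
    (hf : Integrable f) :
    Tendsto (fun t : ℝ => ∫ ξ, Complex.exp ((t * ‖ξ‖ : ℝ) * Complex.I) * f ξ)
      (cocompact ℝ) (nhds 0) := by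
  let E := EuclideanSpace ℝ (Fin d)
  -- replace f by a measurable representative
  set f' : E → ℂ := hf.1.mk f with hf'def
  have hf'sm : StronglyMeasurable f' := hf.1.stronglyMeasurable_mk
  have hff' : f =ᵐ[volume] f' := hf.1.ae_eq_mk
  have hf' : Integrable f' := hf.congr hff'
  have hf'm : Measurable f' := hf'sm.measurable
  have hsame : ∀ t : ℝ, ∫ ξ, Complex.exp ((t * ‖ξ‖ : ℝ) * Complex.I) * f ξ
      = ∫ ξ, Complex.exp ((t * ‖ξ‖ : ℝ) * Complex.I) * f' ξ := by
    intro t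
    refine integral_congr_ae ?_
    filter_upwards [hff'] with ξ hξ
    rw [hξ]
  simp only [funext hsame]
  -- decompose f' into four nonnegative parts
  set a : E → ℝ≥0 := fun ξ => ((f' ξ).re).toNNReal with ha
  set b : E → ℝ≥0 := fun ξ => (-(f' ξ).re).toNNReal with hb
  set c : E → ℝ≥0 := fun ξ => ((f' ξ).im).toNNReal with hc
  set e : E → ℝ≥0 := fun ξ => (-(f' ξ).im).toNNReal with he
  have ham : Measurable a := (Complex.measurable_re.comp hf'm).real_toNNReal
  have hbm : Measurable b := (Complex.measurable_re.comp hf'm).neg.real_toNNReal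
  have hcm : Measurable c := (Complex.measurable_im.comp hf'm).real_toNNReal
  have hem : Measurable e := (Complex.measurable_im.comp hf'm).neg.real_toNNReal
  have hbound : ∀ (u : E → ℝ≥0), (∀ ξ, (u ξ : ℝ) ≤ ‖f' ξ‖) → Measurable u →
      Integrable (fun ξ => (u ξ : ℝ)) := by
    intro u hu hum
    refine Integrable.mono hf'.norm (hum.coe_nnreal_real).aestronglyMeasurable ?_
    refine Eventually.of_forall fun ξ => ?_
    rw [Real.norm_of_nonneg (u ξ).coe_nonneg, Real.norm_of_nonneg (norm_nonneg _)]
    exact hu ξ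
  have habs_re : ∀ ξ : E, |(f' ξ).re| ≤ ‖f' ξ‖ := fun ξ => Complex.abs_re_le_norm (f' ξ)
  have habs_im : ∀ ξ : E, |(f' ξ).im| ≤ ‖f' ξ‖ := fun ξ => Complex.abs_im_le_norm (f' ξ)
  have hai : Integrable (fun ξ => (a ξ : ℝ)) := by
    refine hbound a (fun ξ => ?_) ham
    rw [ha]; simp only
    rw [Real.coe_toNNReal']
    exact max_le ((le_abs_self _).trans (habs_re ξ)) (norm_nonneg _)
  have hbi : Integrable (fun ξ => (b ξ : ℝ)) := by
    refine hbound b (fun ξ => ?_) hbm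
    rw [hb]; simp only
    rw [Real.coe_toNNReal']
    exact max_le ((neg_le_abs _).trans (habs_re ξ)) (norm_nonneg _)
  have hci : Integrable (fun ξ => (c ξ : ℝ)) := by
    refine hbound c (fun ξ => ?_) hcm
    rw [hc]; simp only
    rw [Real.coe_toNNReal']
    exact max_le ((le_abs_self _).trans (habs_im ξ)) (norm_nonneg _)
  have hei : Integrable (fun ξ => (e ξ : ℝ)) := by
    refine hbound e (fun ξ => ?_) hem
    rw [he]; simp only
    rw [Real.coe_toNNReal']
    exact max_le ((neg_le_abs _).trans (habs_im ξ)) (norm_nonneg _)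
  -- pieces are integrable
  have hexp_cont : ∀ t : ℝ, Continuous (fun ξ : E => Complex.exp ((t * ‖ξ‖ : ℝ) * Complex.I)) := by
    intro t; fun_prop
  have hexp_bdd : ∀ (t : ℝ) (ξ : E), ‖Complex.exp ((t * ‖ξ‖ : ℝ) * Complex.I)‖ = 1 := by
    intro t ξ; exact Complex.norm_exp_ofReal_mul_I _
  have hpiece : ∀ (t : ℝ) (u : E → ℝ≥0), Integrable (fun ξ => (u ξ : ℝ)) →
      Integrable (fun ξ => Complex.exp ((t * ‖ξ‖ : ℝ) * Complex.I) * ((u ξ : ℝ) : ℂ)) := by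
    intro t u hui
    refine Integrable.bdd_mul hui.ofReal ((hexp_cont t).aestronglyMeasurable) (c := 1) (Eventually.of_forall fun ξ => ?_)
    rw [hexp_bdd t ξ]
  -- decomposition identity
  have hdec : ∀ (t : ℝ) (ξ : E), Complex.exp ((t * ‖ξ‖ : ℝ) * Complex.I) * f' ξ
      = Complex.exp ((t * ‖ξ‖ : ℝ) * Complex.I) * ((a ξ : ℝ) : ℂ)
        - Complex.exp ((t * ‖ξ‖ : ℝ) * Complex.I) * ((b ξ : ℝ) : ℂ)
        + (Complex.exp ((t * ‖ξ‖ : ℝ) * Complex.I) * ((c ξ : ℝ) : ℂ)) * Complex.I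
        - (Complex.exp ((t * ‖ξ‖ : ℝ) * Complex.I) * ((e ξ : ℝ) : ℂ)) * Complex.I := by
    intro t ξ
    have h1 : (a ξ : ℝ) - (b ξ : ℝ) = (f' ξ).re := rtl_toNNReal_sub _
    have h2 : (c ξ : ℝ) - (e ξ : ℝ) = (f' ξ).im := rtl_toNNReal_sub _
    have h3 : f' ξ = (((a ξ : ℝ) : ℂ) - ((b ξ : ℝ) : ℂ))
        + ((((c ξ : ℝ) : ℂ) - ((e ξ : ℝ) : ℂ))) * Complex.I := by
      rw [← Complex.re_add_im (f' ξ), ← h1, ← h2]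
      push_cast
      ring
    rw [h3]; ring
  -- split the integral
  have hsplit : ∀ t : ℝ, ∫ ξ, Complex.exp ((t * ‖ξ‖ : ℝ) * Complex.I) * f' ξ
      = (∫ ξ, Complex.exp ((t * ‖ξ‖ : ℝ) * Complex.I) * ((a ξ : ℝ) : ℂ))
        - (∫ ξ, Complex.exp ((t * ‖ξ‖ : ℝ) * Complex.I) * ((b ξ : ℝ) : ℂ))
        + (∫ ξ, Complex.exp ((t * ‖ξ‖ : ℝ) * Complex.I) * ((c ξ : ℝ) : ℂ)) * Complex.I
        - (∫ ξ, Complex.exp ((t * ‖ξ‖ : ℝ) * Complex.I) * ((e ξ : ℝ) : ℂ)) * Complex.I := by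
    intro t
    have ia := hpiece t a hai
    have ib := hpiece t b hbi
    have ic := hpiece t c hci
    have ie := hpiece t e hei
    have i12 : Integrable (fun ξ : EuclideanSpace ℝ (Fin d) =>
        Complex.exp ((t * ‖ξ‖ : ℝ) * Complex.I) * ((a ξ : ℝ) : ℂ)
          - Complex.exp ((t * ‖ξ‖ : ℝ) * Complex.I) * ((b ξ : ℝ) : ℂ)) := ia.sub ib
    have i3I : Integrable (fun ξ : EuclideanSpace ℝ (Fin d) =>
        (Complex.exp ((t * ‖ξ‖ : ℝ) * Complex.I) * ((c ξ : ℝ) : ℂ)) * Complex.I) :=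
      ic.mul_const _
    have i4I : Integrable (fun ξ : EuclideanSpace ℝ (Fin d) =>
        (Complex.exp ((t * ‖ξ‖ : ℝ) * Complex.I) * ((e ξ : ℝ) : ℂ)) * Complex.I) :=
      ie.mul_const _
    have i123 : Integrable (fun ξ : EuclideanSpace ℝ (Fin d) =>
        Complex.exp ((t * ‖ξ‖ : ℝ) * Complex.I) * ((a ξ : ℝ) : ℂ)
          - Complex.exp ((t * ‖ξ‖ : ℝ) * Complex.I) * ((b ξ : ℝ) : ℂ)
          + (Complex.exp ((t * ‖ξ‖ : ℝ) * Complex.I) * ((c ξ : ℝ) : ℂ)) * Complex.I) :=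
      i12.add i3I
    rw [integral_congr_ae (Eventually.of_forall (hdec t))]
    rw [integral_sub i123 i4I, integral_add i12 i3I, integral_sub ia ib,
      integral_mul_const, integral_mul_const]
  simp only [funext hsplit]
  -- each piece tends to zero
  have hto : ∀ (u : E → ℝ≥0), Measurable u → Integrable (fun ξ => (u ξ : ℝ)) →
      Tendsto (fun t : ℝ => ∫ ξ, Complex.exp ((t * ‖ξ‖ : ℝ) * Complex.I) * ((u ξ : ℝ) : ℂ))
        (cocompact ℝ) (nhds 0) := by
    intro u hum hui
    have := rtl_keyExp_nnreal d hd u hum hui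
    refine this.congr (fun t => ?_)
    refine integral_congr_ae (Eventually.of_forall fun ξ => ?_)
    show (u ξ : ℝ) • Complex.exp ((t * ‖ξ‖ : ℝ) * Complex.I)
        = Complex.exp ((t * ‖ξ‖ : ℝ) * Complex.I) * ((u ξ : ℝ) : ℂ)
    rw [Complex.real_smul]
    ring
  have hA := hto a ham hai
  have hB := hto b hbm hbi
  have hC := hto c hcm hci
  have hEe := hto e hem hei
  have := ((hA.sub hB).add (hC.mul_const Complex.I)).sub (hEe.mul_const Complex.I)
  simpa using this

/-- **First-order Riemann–Lebesgue decay of radial trigonometric multipliers.** For every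
integrable `f : ℝ^d → ℂ`, both `∫ cos(t|ξ|) f ξ dξ → 0` and `∫ sin(t|ξ|) f ξ dξ → 0`
as `|t| → ∞`. -/
theorem radial_trig_riemann_lebesgue (d : ℕ) (hd : 1 ≤ d)
    (f : EuclideanSpace ℝ (Fin d) → ℂ) (hf : Integrable f) :
    Tendsto (fun t : ℝ => ∫ ξ, (Real.cos (t * ‖ξ‖) : ℂ) * f ξ)
      (cocompact ℝ) (nhds 0) ∧
    Tendsto (fun t : ℝ => ∫ ξ, (Real.sin (t * ‖ξ‖) : ℂ) * f ξ)
      (cocompact ℝ) (nhds 0) := by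
  let E := EuclideanSpace ℝ (Fin d)
  set T : ℝ → ℂ := fun t => ∫ ξ, Complex.exp ((t * ‖ξ‖ : ℝ) * Complex.I) * f ξ with hT
  have hTto : Tendsto T (cocompact ℝ) (nhds 0) := rtl_keyExp d hd f hf
  have hneg : Tendsto (fun t : ℝ => -t) (cocompact ℝ) (cocompact ℝ) :=
    (Homeomorph.neg ℝ).isClosedEmbedding.tendsto_cocompact
  have hTneg : Tendsto (fun t : ℝ => T (-t)) (cocompact ℝ) (nhds 0) := hTto.comp hneg
  have hint : ∀ t : ℝ, Integrable (fun ξ : E => Complex.exp ((t * ‖ξ‖ : ℝ) * Complex.I) * f ξ) := by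
    intro t
    refine Integrable.bdd_mul hf ?_ (c := 1) (Eventually.of_forall fun ξ => ?_)
    · exact (Continuous.aestronglyMeasurable (by fun_prop))
    · rw [Complex.norm_exp_ofReal_mul_I]
  constructor
  · have key : ∀ t : ℝ, ∫ ξ, (Real.cos (t * ‖ξ‖) : ℂ) * f ξ
        = (2 : ℂ)⁻¹ • (T t + T (-t)) := by
      intro t
      have hptwise : ∀ ξ : E, (Real.cos (t * ‖ξ‖) : ℂ) * f ξ
          = (2 : ℂ)⁻¹ • (Complex.exp ((t * ‖ξ‖ : ℝ) * Complex.I) * f ξ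
            + Complex.exp ((-t * ‖ξ‖ : ℝ) * Complex.I) * f ξ) := by
        intro ξ
        rw [Complex.ofReal_cos, Complex.cos]
        have : ((-t * ‖ξ‖ : ℝ) : ℂ) = -((t * ‖ξ‖ : ℝ) : ℂ) := by push_cast; ring
        rw [this]
        simp only [smul_eq_mul]
        ring
      rw [integral_congr_ae (Eventually.of_forall hptwise), integral_smul,
        integral_add (hint t) (hint (-t))]
    simp only [funext key]
    have := (hTto.add hTneg).const_smul ((2 : ℂ)⁻¹)
    simpa using this
  · have key : ∀ t : ℝ, ∫ ξ, (Real.sin (t * ‖ξ‖) : ℂ) * f ξ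
        = ((2 : ℂ)⁻¹ * Complex.I) • (T (-t) - T t) := by
      intro t
      have hptwise : ∀ ξ : E, (Real.sin (t * ‖ξ‖) : ℂ) * f ξ
          = ((2 : ℂ)⁻¹ * Complex.I) • (Complex.exp ((-t * ‖ξ‖ : ℝ) * Complex.I) * f ξ
            - Complex.exp ((t * ‖ξ‖ : ℝ) * Complex.I) * f ξ) := by
        intro ξ
        rw [Complex.ofReal_sin, Complex.sin]
        have : ((-t * ‖ξ‖ : ℝ) : ℂ) = -((t * ‖ξ‖ : ℝ) : ℂ) := by push_cast; ring
        rw [this]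
        simp only [smul_eq_mul]
        ring
      rw [integral_congr_ae (Eventually.of_forall hptwise), integral_smul,
        integral_sub (hint (-t)) (hint t)]
    simp only [funext key]
    have := (hTneg.sub hTto).const_smul ((2 : ℂ)⁻¹ * Complex.I)
    simpa using this
end

section
/- Energy conservation and asymptotic equipartition of energy for the free wave equation on ℝ^d (Fourier side): let g₀, g₁ ∈ L²(ℝ^d, ℂ) with ξ ↦ |ξ| g₀(ξ) also in L²(ℝ^d). Define the potential energy P(t) = ∫_{ℝ^d} | |ξ| cos(t|ξ|) g₀(ξ) + sin(t|ξ|) g₁(ξ) |² dξ and the kinetic energy K(t) = ∫_{ℝ^d} | −|ξ| sin(t|ξ|) g₀(ξ) + cos(t|ξ|) g₁(ξ) |² dξ. Then (i) for every t ∈ ℝ, P(t) + K(t) = E where E := ∫_{ℝ^d} ( |ξ|² |g₀(ξ)|² + |g₁(ξ)|² ) dξ, and (ii) P(t) → E/2 and K(t) → E/2 as |t| → ∞. -/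
open MeasureTheory Filter

open Complex Topology

lemma pt_sum (c s : ℝ) (hcs : c ^ 2 + s ^ 2 = 1) (a b : ℂ) :
    ‖(c : ℂ) * a + (s : ℂ) * b‖ ^ 2 + ‖-((s : ℂ) * a) + (c : ℂ) * b‖ ^ 2
      = ‖a‖ ^ 2 + ‖b‖ ^ 2 := by
  have h : ∀ z : ℂ, ‖z‖ ^ 2 = z.re ^ 2 + z.im ^ 2 := by
    intro z
    rw [← Complex.normSq_eq_norm_sq]
    · simp [Complex.normSq_apply]; ring
  simp only [h, Complex.add_re, Complex.add_im, Complex.mul_re, Complex.mul_im,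
    Complex.neg_re, Complex.neg_im, Complex.ofReal_re, Complex.ofReal_im]
  nlinarith [sq_nonneg a.re, sq_nonneg a.im]

lemma pt_P (θ : ℝ) (a b : ℂ) :
    ‖(Real.cos θ : ℂ) * a + (Real.sin θ : ℂ) * b‖ ^ 2
      = (‖a‖ ^ 2 + ‖b‖ ^ 2) / 2
        + (Complex.exp ((((-2) * θ : ℝ) : ℂ) * Complex.I)
            * ((((‖a‖ ^ 2 - ‖b‖ ^ 2) / 2 : ℝ) : ℂ)
                + (((a * (starRingEnd ℂ) b).re : ℝ) : ℂ) * Complex.I)).re := by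
  have h : ∀ z : ℂ, ‖z‖ ^ 2 = z.re ^ 2 + z.im ^ 2 := by
    intro z
    rw [← Complex.normSq_eq_norm_sq]
    simp [Complex.normSq_apply]; ring
  have he : Complex.exp ((((-2) * θ : ℝ) : ℂ) * Complex.I)
      = ((Real.cos ((-2) * θ) : ℝ) : ℂ) + ((Real.sin ((-2) * θ) : ℝ) : ℂ) * Complex.I := by
    rw [Complex.exp_mul_I, Complex.ofReal_cos, Complex.ofReal_sin]
  rw [he]
  have hc2 : Real.cos ((-2) * θ) = 2 * Real.cos θ ^ 2 - 1 := by
    rw [neg_mul, Real.cos_neg, Real.cos_two_mul]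
  have hs2 : Real.sin ((-2) * θ) = -(2 * Real.sin θ * Real.cos θ) := by
    rw [neg_mul, Real.sin_neg, Real.sin_two_mul]
  have hcs : Real.sin θ ^ 2 + Real.cos θ ^ 2 = 1 := Real.sin_sq_add_cos_sq θ
  simp only [h, hc2, hs2, Complex.add_re, Complex.add_im, Complex.mul_re, Complex.mul_im,
    Complex.ofReal_re, Complex.ofReal_im, Complex.I_re, Complex.I_im,
    Complex.conj_re, Complex.conj_im]
  nlinarith [sq_nonneg a.re, sq_nonneg a.im, hcs]

open Set Metric in
lemma norm_preimage_null {E : Type*} [NormedAddCommGroup E] [NormedSpace ℝ E]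
    [MeasurableSpace E] [BorelSpace E] [FiniteDimensional ℝ E] [Nontrivial E]
    (μ : Measure E) [μ.IsAddHaarMeasure] {s : Set ℝ} (hs : MeasurableSet s)
    (h0 : volume s = 0) : μ ((fun x : E => ‖x‖) ⁻¹' s) = 0 := by
  set A : Set E := (fun x : E => ‖x‖) ⁻¹' s with hA
  have hAmeas : MeasurableSet A := measurable_norm hs
  set T : Set (Ioi (0 : ℝ)) := Subtype.val ⁻¹' s with hT
  have hTmeas : MeasurableSet T := measurable_subtype_coe hs
  have hTnull : Measure.volumeIoiPow (Module.finrank ℝ E - 1) T = 0 := by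
    rw [Measure.volumeIoiPow]
    refine withDensity_absolutelyContinuous _ _ ?_
    rw [comap_subtype_coe_apply measurableSet_Ioi, Subtype.image_preimage_coe]
    exact measure_mono_null (Set.inter_subset_right) h0
  have key := (Measure.measurePreserving_homeomorphUnitSphereProd μ).measure_preimage
      (s := (univ : Set (sphere (0:E) 1)) ×ˢ T)
      ((MeasurableSet.univ.prod hTmeas).nullMeasurableSet)
  have hpre : (homeomorphUnitSphereProd E) ⁻¹' ((univ : Set (sphere (0:E) 1)) ×ˢ T)
      = Subtype.val ⁻¹' A := by
    ext x
    simp [T, A, Set.mem_prod]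
  rw [hpre, Measure.prod_prod, hTnull, mul_zero,
    comap_subtype_coe_apply (measurableSet_singleton (0:E)).compl,
    Subtype.image_preimage_coe] at key
  have : μ A ≤ μ (A ∩ {(0:E)}ᶜ) + μ {(0:E)} := by
    refine (measure_mono ?_).trans (measure_union_le _ _)
    intro x hx
    by_cases hx0 : x = 0
    · exact Or.inr (by simp [hx0])
    · exact Or.inl ⟨hx, hx0⟩
  have hk : μ (A ∩ {(0:E)}ᶜ) = 0 := by
    first
      | simpa using key
      | (rw [Set.inter_comm]; simpa using key)
  simp only [hk, measure_singleton, add_zero] at this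
  exact le_antisymm this zero_le

lemma tendsto_cocompact_affine (c : ℝ) (hc : c ≠ 0) :
    Tendsto (fun t : ℝ => c * t) (cocompact ℝ) (cocompact ℝ) := by
  have h : (fun t : ℝ => c * t) = (Homeomorph.mulLeft₀ c hc) := rfl
  rw [h]
  exact ((Homeomorph.mulLeft₀ c hc).map_cocompact).le

lemma RL1 (H : ℝ → ℂ) :
    Tendsto (fun t : ℝ => ∫ r : ℝ, Complex.exp (((t * r : ℝ) : ℂ) * Complex.I) * H r)
      (cocompact ℝ) (𝓝 0) := by
  have base := Real.tendsto_integral_exp_smul_cocompact (E := ℂ) H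
  have hπ : (2 * Real.pi) ≠ 0 := by positivity
  have hφ : Tendsto (fun t : ℝ => (-(1 / (2 * Real.pi))) * t) (cocompact ℝ)
      (cocompact ℝ) :=
    tendsto_cocompact_affine _ (by simp [Real.pi_ne_zero])
  refine (base.comp hφ).congr fun t => ?_
  simp only [Function.comp_def]
  refine integral_congr_ae (Filter.Eventually.of_forall fun r => ?_)
  simp only [Circle.smul_def, Real.fourierChar_apply]
  have : 2 * Real.pi * -(r * (-(1 / (2 * Real.pi)) * t)) = t * r := by
    field_simp
  rw [this, smul_eq_mul]

lemma keyRL_nonneg {E : Type*} [NormedAddCommGroup E] [NormedSpace ℝ E]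
    [MeasurableSpace E] [BorelSpace E] [FiniteDimensional ℝ E] [Nontrivial E]
    (μ : Measure E) [μ.IsAddHaarMeasure] (f : E → ℝ) (hf : Integrable f μ)
    (hpos : 0 ≤ f) :
    Tendsto (fun t : ℝ => ∫ ξ, Complex.exp (((t * ‖ξ‖ : ℝ) : ℂ) * Complex.I) * (f ξ : ℂ) ∂μ)
      (cocompact ℝ) (𝓝 0) := by
  set ρ : E → NNReal := fun x => (f x).toNNReal with hρ
  have hρmeas : AEMeasurable ρ μ := hf.aemeasurable.real_toNNReal
  set μf := μ.withDensity (fun x => (ρ x : ENNReal)) with hμf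
  have hfin : ∫⁻ x, (ρ x : ENNReal) ∂μ ≠ ⊤ := by
    have h1 : ∀ x, ((ρ x : ENNReal)) = (‖f x‖₊ : ENNReal) := fun x => by
      rw [hρ]; simp [Real.toNNReal_of_nonneg (hpos x), Real.nnnorm_of_nonneg (hpos x)]
    simp only [h1]
    exact hf.hasFiniteIntegral.ne
  haveI : IsFiniteMeasure μf := isFiniteMeasure_withDensity hfin
  set ν := μf.map (fun x => ‖x‖) with hν
  haveI : IsFiniteMeasure ν := by
    constructor
    rw [hν, Measure.map_apply measurable_norm MeasurableSet.univ]
    simp only [Set.preimage_univ]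
    exact measure_lt_top μf _
  have hac : ν ≪ (volume : Measure ℝ) := by
    refine Measure.AbsolutelyContinuous.mk fun s hs h0 => ?_
    rw [hν, Measure.map_apply measurable_norm hs]
    exact withDensity_absolutelyContinuous μ _ (norm_preimage_null μ hs h0)
  have key := RL1 (fun r => ((ν.rnDeriv volume r).toReal : ℂ))
  refine key.congr fun t => ?_
  have hcont : Continuous (fun r : ℝ => Complex.exp (((t * r : ℝ) : ℂ) * Complex.I)) := by
    fun_prop
  calc
    ∫ r : ℝ, Complex.exp (((t * r : ℝ) : ℂ) * Complex.I) * ((ν.rnDeriv volume r).toReal : ℂ)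
        = ∫ r : ℝ, (ν.rnDeriv volume r).toReal • Complex.exp (((t * r : ℝ) : ℂ) * Complex.I) := by
          refine integral_congr_ae (Filter.Eventually.of_forall fun r => ?_)
          simp only [Complex.real_smul]
          ring
    _ = ∫ r : ℝ, Complex.exp (((t * r : ℝ) : ℂ) * Complex.I) ∂ν :=
          integral_rnDeriv_smul hac
    _ = ∫ x, Complex.exp (((t * ‖x‖ : ℝ) : ℂ) * Complex.I) ∂μf := by
          rw [hν, integral_map measurable_norm.aemeasurable hcont.aestronglyMeasurable]
    _ = ∫ x, ρ x • Complex.exp (((t * ‖x‖ : ℝ) : ℂ) * Complex.I) ∂μ :=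
          integral_withDensity_eq_integral_smul₀ hρmeas _
    _ = ∫ x, Complex.exp (((t * ‖x‖ : ℝ) : ℂ) * Complex.I) * (f x : ℂ) ∂μ := by
          refine integral_congr_ae (Filter.Eventually.of_forall fun x => ?_)
          simp only [NNReal.smul_def, hρ, Real.coe_toNNReal _ (hpos x), Complex.real_smul]
          ring

lemma keyRL {E : Type*} [NormedAddCommGroup E] [NormedSpace ℝ E]
    [MeasurableSpace E] [BorelSpace E] [FiniteDimensional ℝ E] [Nontrivial E]
    (μ : Measure E) [μ.IsAddHaarMeasure] (w : E → ℂ) (hw : Integrable w μ) :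
    Tendsto (fun t : ℝ => ∫ ξ, Complex.exp (((t * ‖ξ‖ : ℝ) : ℂ) * Complex.I) * w ξ ∂μ)
      (cocompact ℝ) (𝓝 0) := by
  set e : ℝ → E → ℂ := fun t ξ => Complex.exp (((t * ‖ξ‖ : ℝ) : ℂ) * Complex.I) with he
  set u₁ : E → ℝ := fun x => max (w x).re 0 with hu₁d
  set u₂ : E → ℝ := fun x => max (-(w x).re) 0 with hu₂d
  set v₁ : E → ℝ := fun x => max (w x).im 0 with hv₁d
  set v₂ : E → ℝ := fun x => max (-(w x).im) 0 with hv₂d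
  have hwre : Integrable (fun x => (w x).re) μ := hw.re
  have hwim : Integrable (fun x => (w x).im) μ := hw.im
  have hu₁ : Integrable u₁ μ := hwre.pos_part
  have hu₂ : Integrable u₂ μ := hwre.neg.pos_part
  have hv₁ : Integrable v₁ μ := hwim.pos_part
  have hv₂ : Integrable v₂ μ := hwim.neg.pos_part
  have h1 := keyRL_nonneg μ u₁ hu₁ fun x => le_max_right _ _
  have h2 := keyRL_nonneg μ u₂ hu₂ fun x => le_max_right _ _
  have h3 := keyRL_nonneg μ v₁ hv₁ fun x => le_max_right _ _
  have h4 := keyRL_nonneg μ v₂ hv₂ fun x => le_max_right _ _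
  have hlim := ((h1.sub h2).add (((h3.sub h4)).mul_const Complex.I))
  rw [show (0 : ℂ) - 0 + (0 - 0) * Complex.I = 0 by ring] at hlim
  refine hlim.congr fun t => Eq.symm ?_
  have hemeas : AEStronglyMeasurable (e t) μ := by
    apply Continuous.aestronglyMeasurable
    fun_prop
  have hebdd : ∃ C, ∀ x, ‖e t x‖ ≤ C :=
    ⟨1, fun x => le_of_eq (Complex.norm_exp_ofReal_mul_I _)⟩
  have ie : ∀ (g : E → ℝ), Integrable g μ →
      Integrable (fun ξ => e t ξ * (g ξ : ℂ)) μ := fun g hg =>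
    hg.ofReal.bdd_mul hemeas (Filter.Eventually.of_forall hebdd.choose_spec)
  have hpt : ∀ ξ, e t ξ * w ξ
      = e t ξ * (u₁ ξ : ℂ) - e t ξ * (u₂ ξ : ℂ)
        + ((e t ξ * (v₁ ξ : ℂ)) * Complex.I - (e t ξ * (v₂ ξ : ℂ)) * Complex.I) := by
    intro ξ
    have hre : u₁ ξ - u₂ ξ = (w ξ).re := max_zero_sub_max_neg_zero_eq_self _
    have him : v₁ ξ - v₂ ξ = (w ξ).im := max_zero_sub_max_neg_zero_eq_self _
    have hw' : w ξ = ((u₁ ξ - u₂ ξ : ℝ) : ℂ) + ((v₁ ξ - v₂ ξ : ℝ) : ℂ) * Complex.I := by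
      rw [hre, him, Complex.re_add_im]
    rw [hw']
    push_cast
    ring
  calc
    ∫ ξ, e t ξ * w ξ ∂μ
        = ∫ ξ, (e t ξ * (u₁ ξ : ℂ) - e t ξ * (u₂ ξ : ℂ)
            + ((e t ξ * (v₁ ξ : ℂ)) * Complex.I - (e t ξ * (v₂ ξ : ℂ)) * Complex.I)) ∂μ :=
          integral_congr_ae (Filter.Eventually.of_forall hpt)
    _ = (∫ ξ, e t ξ * (u₁ ξ : ℂ) ∂μ) - (∫ ξ, e t ξ * (u₂ ξ : ℂ) ∂μ)
        + ((∫ ξ, e t ξ * (v₁ ξ : ℂ) ∂μ) - (∫ ξ, e t ξ * (v₂ ξ : ℂ) ∂μ)) * Complex.I := by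
          have hA : Integrable (fun ξ => e t ξ * (u₁ ξ : ℂ) - e t ξ * (u₂ ξ : ℂ)) μ :=
            (ie u₁ hu₁).sub (ie u₂ hu₂)
          have hB1 : Integrable (fun ξ => e t ξ * (v₁ ξ : ℂ) * Complex.I) μ :=
            (ie v₁ hv₁).mul_const _
          have hB2 : Integrable (fun ξ => e t ξ * (v₂ ξ : ℂ) * Complex.I) μ :=
            (ie v₂ hv₂).mul_const _
          have hB : Integrable
              (fun ξ => e t ξ * (v₁ ξ : ℂ) * Complex.I - e t ξ * (v₂ ξ : ℂ) * Complex.I) μ :=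
            hB1.sub hB2
          rw [integral_add hA hB, integral_sub (ie u₁ hu₁) (ie u₂ hu₂),
            integral_sub hB1 hB2, integral_mul_const, integral_mul_const, sub_mul]

/-- **Energy conservation and asymptotic equipartition of energy for the free wave equation
on `ℝ^d` (Fourier side).** For `g₀, g₁ ∈ L²(ℝ^d, ℂ)` with `ξ ↦ |ξ| g₀(ξ)` also in `L²`,
with potential energy `P(t) = ∫ ||ξ| cos(t|ξ|) g₀(ξ) + sin(t|ξ|) g₁(ξ)|² dξ` and kinetic
energy `K(t) = ∫ |−|ξ| sin(t|ξ|) g₀(ξ) + cos(t|ξ|) g₁(ξ)|² dξ`, we have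
`P(t) + K(t) = E := ∫ (|ξ|²|g₀(ξ)|² + |g₁(ξ)|²) dξ` for all `t`, and `P(t) → E/2`,
`K(t) → E/2` as `|t| → ∞`. -/
theorem free_wave_equipartition_of_energy (d : ℕ) (hd : 1 ≤ d)
    (g₀ g₁ : EuclideanSpace ℝ (Fin d) → ℂ)
    (h₀ : MemLp g₀ 2 volume) (h₁ : MemLp g₁ 2 volume)
    (h₀' : MemLp (fun ξ => (‖ξ‖ : ℂ) * g₀ ξ) 2 volume) :
    (∀ t : ℝ,
      (∫ ξ, ‖(‖ξ‖ : ℂ) * (Real.cos (t * ‖ξ‖) : ℂ) * g₀ ξ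
          + (Real.sin (t * ‖ξ‖) : ℂ) * g₁ ξ‖ ^ 2) +
      (∫ ξ, ‖-((‖ξ‖ : ℂ) * (Real.sin (t * ‖ξ‖) : ℂ) * g₀ ξ)
          + (Real.cos (t * ‖ξ‖) : ℂ) * g₁ ξ‖ ^ 2) =
      ∫ ξ, (‖ξ‖ ^ 2 * ‖g₀ ξ‖ ^ 2 + ‖g₁ ξ‖ ^ 2)) ∧
    Tendsto (fun t : ℝ =>
        ∫ ξ, ‖(‖ξ‖ : ℂ) * (Real.cos (t * ‖ξ‖) : ℂ) * g₀ ξ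
          + (Real.sin (t * ‖ξ‖) : ℂ) * g₁ ξ‖ ^ 2)
      (cocompact ℝ)
      (nhds ((∫ ξ, (‖ξ‖ ^ 2 * ‖g₀ ξ‖ ^ 2 + ‖g₁ ξ‖ ^ 2)) / 2)) ∧
    Tendsto (fun t : ℝ =>
        ∫ ξ, ‖-((‖ξ‖ : ℂ) * (Real.sin (t * ‖ξ‖) : ℂ) * g₀ ξ)
          + (Real.cos (t * ‖ξ‖) : ℂ) * g₁ ξ‖ ^ 2)
      (cocompact ℝ)
      (nhds ((∫ ξ, (‖ξ‖ ^ 2 * ‖g₀ ξ‖ ^ 2 + ‖g₁ ξ‖ ^ 2)) / 2)) := by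
  haveI : Nonempty (Fin d) := Fin.pos_iff_nonempty.mp hd
  haveI : Nontrivial (EuclideanSpace ℝ (Fin d)) := by infer_instance
  set a : EuclideanSpace ℝ (Fin d) → ℂ := fun ξ => (‖ξ‖ : ℂ) * g₀ ξ with hadef
  set b : EuclideanSpace ℝ (Fin d) → ℂ := g₁ with hbdef
  have ha : AEStronglyMeasurable a volume := h₀'.aestronglyMeasurable
  have hb : AEStronglyMeasurable b volume := h₁.aestronglyMeasurable
  have ha2 : Integrable (fun ξ => ‖a ξ‖ ^ 2) volume := h₀'.norm.integrable_sq
  have hb2 : Integrable (fun ξ => ‖b ξ‖ ^ 2) volume := h₁.norm.integrable_sq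
  have hE : Integrable (fun ξ => ‖a ξ‖ ^ 2 + ‖b ξ‖ ^ 2) volume := ha2.add hb2
  have hEeq : (fun ξ : EuclideanSpace ℝ (Fin d) => ‖ξ‖ ^ 2 * ‖g₀ ξ‖ ^ 2 + ‖g₁ ξ‖ ^ 2)
      = fun ξ => ‖a ξ‖ ^ 2 + ‖b ξ‖ ^ 2 := by
    funext ξ
    rw [hadef, hbdef]
    simp only [norm_mul, Complex.norm_real, Real.norm_eq_abs, abs_norm, mul_pow]
  have hform : ∀ t : ℝ,
      (fun ξ : EuclideanSpace ℝ (Fin d) => ‖(‖ξ‖ : ℂ) * (Real.cos (t * ‖ξ‖) : ℂ) * g₀ ξ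
          + (Real.sin (t * ‖ξ‖) : ℂ) * g₁ ξ‖ ^ 2)
      = fun ξ => ‖(Real.cos (t * ‖ξ‖) : ℂ) * a ξ + (Real.sin (t * ‖ξ‖) : ℂ) * b ξ‖ ^ 2 := by
    intro t
    funext ξ
    rw [hadef, hbdef, show (‖ξ‖ : ℂ) * (Real.cos (t * ‖ξ‖) : ℂ) * g₀ ξ
      = (Real.cos (t * ‖ξ‖) : ℂ) * ((‖ξ‖ : ℂ) * g₀ ξ) by ring]
  have hformK : ∀ t : ℝ,
      (fun ξ : EuclideanSpace ℝ (Fin d) => ‖-((‖ξ‖ : ℂ) * (Real.sin (t * ‖ξ‖) : ℂ) * g₀ ξ)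
          + (Real.cos (t * ‖ξ‖) : ℂ) * g₁ ξ‖ ^ 2)
      = fun ξ => ‖-((Real.sin (t * ‖ξ‖) : ℂ) * a ξ) + (Real.cos (t * ‖ξ‖) : ℂ) * b ξ‖ ^ 2 := by
    intro t
    funext ξ
    rw [hadef, hbdef, show (‖ξ‖ : ℂ) * (Real.sin (t * ‖ξ‖) : ℂ) * g₀ ξ
      = (Real.sin (t * ‖ξ‖) : ℂ) * ((‖ξ‖ : ℂ) * g₀ ξ) by ring]
  rw [← hbdef] at hform hformK hEeq
  simp only [hform, hformK, hEeq]
  -- integrability of the potential-energy integrand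
  have hPint : ∀ t : ℝ, Integrable
      (fun ξ => ‖(Real.cos (t * ‖ξ‖) : ℂ) * a ξ + (Real.sin (t * ‖ξ‖) : ℂ) * b ξ‖ ^ 2)
      volume := by
    intro t
    have hcc : Continuous fun ξ : EuclideanSpace ℝ (Fin d) => ((Real.cos (t * ‖ξ‖) : ℝ) : ℂ) :=
      by fun_prop
    have hsc : Continuous fun ξ : EuclideanSpace ℝ (Fin d) => ((Real.sin (t * ‖ξ‖) : ℝ) : ℂ) :=
      by fun_prop
    have hF : AEStronglyMeasurable
        (fun ξ => (Real.cos (t * ‖ξ‖) : ℂ) * a ξ + (Real.sin (t * ‖ξ‖) : ℂ) * b ξ) volume :=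
      (hcc.aestronglyMeasurable.mul ha).add (hsc.aestronglyMeasurable.mul hb)
    refine Integrable.mono' (hE.const_mul 2) ?_ ?_
    · exact (hF.norm.mul hF.norm).congr (Filter.Eventually.of_forall fun ξ => (sq ‖_‖).symm)
    · refine Filter.Eventually.of_forall fun ξ => ?_
      rw [Real.norm_of_nonneg (sq_nonneg _)]
      have h1 := norm_add_le ((Real.cos (t * ‖ξ‖) : ℂ) * a ξ) ((Real.sin (t * ‖ξ‖) : ℂ) * b ξ)
      have h2 : ‖(Real.cos (t * ‖ξ‖) : ℂ) * a ξ‖ ≤ ‖a ξ‖ := by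
        rw [norm_mul, Complex.norm_real, Real.norm_eq_abs]
        nlinarith [Real.abs_cos_le_one (t * ‖ξ‖), norm_nonneg (a ξ)]
      have h3 : ‖(Real.sin (t * ‖ξ‖) : ℂ) * b ξ‖ ≤ ‖b ξ‖ := by
        rw [norm_mul, Complex.norm_real, Real.norm_eq_abs]
        nlinarith [Real.abs_sin_le_one (t * ‖ξ‖), norm_nonneg (b ξ)]
      have h4 : ‖(Real.cos (t * ‖ξ‖) : ℂ) * a ξ + (Real.sin (t * ‖ξ‖) : ℂ) * b ξ‖
          ≤ ‖a ξ‖ + ‖b ξ‖ := h1.trans (add_le_add h2 h3)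
      have h5 : ‖(Real.cos (t * ‖ξ‖) : ℂ) * a ξ + (Real.sin (t * ‖ξ‖) : ℂ) * b ξ‖ ^ 2
          ≤ (‖a ξ‖ + ‖b ξ‖) ^ 2 := by
        have := norm_nonneg ((Real.cos (t * ‖ξ‖) : ℂ) * a ξ + (Real.sin (t * ‖ξ‖) : ℂ) * b ξ)
        nlinarith
      nlinarith [sq_nonneg (‖a ξ‖ - ‖b ξ‖)]
  -- part (i)
  have part1 : ∀ t : ℝ,
      (∫ ξ, ‖(Real.cos (t * ‖ξ‖) : ℂ) * a ξ + (Real.sin (t * ‖ξ‖) : ℂ) * b ξ‖ ^ 2) +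
      (∫ ξ, ‖-((Real.sin (t * ‖ξ‖) : ℂ) * a ξ) + (Real.cos (t * ‖ξ‖) : ℂ) * b ξ‖ ^ 2) =
      ∫ ξ, (‖a ξ‖ ^ 2 + ‖b ξ‖ ^ 2) := by
    intro t
    have hKpt : (fun ξ : EuclideanSpace ℝ (Fin d) =>
        ‖-((Real.sin (t * ‖ξ‖) : ℂ) * a ξ) + (Real.cos (t * ‖ξ‖) : ℂ) * b ξ‖ ^ 2)
        = fun ξ => (‖a ξ‖ ^ 2 + ‖b ξ‖ ^ 2)
          - ‖(Real.cos (t * ‖ξ‖) : ℂ) * a ξ + (Real.sin (t * ‖ξ‖) : ℂ) * b ξ‖ ^ 2 := by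
      funext ξ
      have := pt_sum (Real.cos (t * ‖ξ‖)) (Real.sin (t * ‖ξ‖))
        (by nlinarith [Real.sin_sq_add_cos_sq (t * ‖ξ‖)]) (a ξ) (b ξ)
      linarith
    rw [hKpt, integral_sub hE (hPint t)]
    ring
  -- the oscillating term
  set w : EuclideanSpace ℝ (Fin d) → ℂ := fun ξ =>
    (((‖a ξ‖ ^ 2 - ‖b ξ‖ ^ 2) / 2 : ℝ) : ℂ)
      + (((a ξ * (starRingEnd ℂ) (b ξ)).re : ℝ) : ℂ) * Complex.I with hwdef
  have hv : Integrable (fun ξ => (a ξ * (starRingEnd ℂ) (b ξ)).re) volume := by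
    refine Integrable.mono' hE
      (Complex.continuous_re.comp_aestronglyMeasurable (ha.mul (Complex.continuous_conj.comp_aestronglyMeasurable hb))) ?_
    refine Filter.Eventually.of_forall fun ξ => ?_
    have h1 : |(a ξ * (starRingEnd ℂ) (b ξ)).re| ≤ ‖a ξ * (starRingEnd ℂ) (b ξ)‖ :=
      Complex.abs_re_le_norm _
    rw [norm_mul, RCLike.norm_conj] at h1
    rw [Real.norm_eq_abs]
    nlinarith [sq_nonneg (‖a ξ‖ - ‖b ξ‖), norm_nonneg (a ξ), norm_nonneg (b ξ)]
  have hw : Integrable w volume :=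
    (((ha2.sub hb2).div_const 2).ofReal).add (hv.ofReal.mul_const Complex.I)
  have hW2 := (keyRL volume w hw).comp (tendsto_cocompact_affine (-2) (by norm_num))
  simp only [Function.comp_def] at hW2
  have hRe : Tendsto (fun t : ℝ =>
      (∫ ξ, Complex.exp ((((-2 * t) * ‖ξ‖ : ℝ) : ℂ) * Complex.I) * w ξ).re)
      (cocompact ℝ) (𝓝 0) := by
    have := (Complex.continuous_re.tendsto (0 : ℂ)).comp hW2
    simpa [Function.comp_def] using this
  have PtEq : ∀ t : ℝ,
      (∫ ξ, ‖(Real.cos (t * ‖ξ‖) : ℂ) * a ξ + (Real.sin (t * ‖ξ‖) : ℂ) * b ξ‖ ^ 2)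
      = (∫ ξ, (‖a ξ‖ ^ 2 + ‖b ξ‖ ^ 2)) / 2
        + (∫ ξ, Complex.exp ((((-2 * t) * ‖ξ‖ : ℝ) : ℂ) * Complex.I) * w ξ).re := by
    intro t
    have hexpm : AEStronglyMeasurable
        (fun ξ : EuclideanSpace ℝ (Fin d) =>
          Complex.exp ((((-2 * t) * ‖ξ‖ : ℝ) : ℂ) * Complex.I)) volume := by
      apply Continuous.aestronglyMeasurable
      fun_prop
    have hew : Integrable
        (fun ξ => Complex.exp ((((-2 * t) * ‖ξ‖ : ℝ) : ℂ) * Complex.I) * w ξ) volume :=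
      hw.bdd_mul hexpm (Filter.Eventually.of_forall fun x => le_of_eq (Complex.norm_exp_ofReal_mul_I _))
    have hpt : ∀ ξ : EuclideanSpace ℝ (Fin d),
        ‖(Real.cos (t * ‖ξ‖) : ℂ) * a ξ + (Real.sin (t * ‖ξ‖) : ℂ) * b ξ‖ ^ 2
        = (‖a ξ‖ ^ 2 + ‖b ξ‖ ^ 2) / 2
          + (Complex.exp ((((-2 * t) * ‖ξ‖ : ℝ) : ℂ) * Complex.I) * w ξ).re := by
      intro ξ
      have h := pt_P (t * ‖ξ‖) (a ξ) (b ξ)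
      rw [show ((-2 : ℝ)) * (t * ‖ξ‖) = (-2 * t) * ‖ξ‖ by ring] at h
      exact h
    calc
      (∫ ξ, ‖(Real.cos (t * ‖ξ‖) : ℂ) * a ξ + (Real.sin (t * ‖ξ‖) : ℂ) * b ξ‖ ^ 2)
          = ∫ ξ, ((‖a ξ‖ ^ 2 + ‖b ξ‖ ^ 2) / 2
            + (Complex.exp ((((-2 * t) * ‖ξ‖ : ℝ) : ℂ) * Complex.I) * w ξ).re) :=
        integral_congr_ae (Filter.Eventually.of_forall hpt)
      _ = (∫ ξ, (‖a ξ‖ ^ 2 + ‖b ξ‖ ^ 2) / 2)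
          + ∫ ξ, (Complex.exp ((((-2 * t) * ‖ξ‖ : ℝ) : ℂ) * Complex.I) * w ξ).re :=
        integral_add (hE.div_const 2) hew.re
      _ = (∫ ξ, (‖a ξ‖ ^ 2 + ‖b ξ‖ ^ 2)) / 2
          + (∫ ξ, Complex.exp ((((-2 * t) * ‖ξ‖ : ℝ) : ℂ) * Complex.I) * w ξ).re := by
        rw [integral_div]
        congr 1
        simpa using integral_re hew
  have Plim : Tendsto (fun t : ℝ =>
      ∫ ξ, ‖(Real.cos (t * ‖ξ‖) : ℂ) * a ξ + (Real.sin (t * ‖ξ‖) : ℂ) * b ξ‖ ^ 2)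
      (cocompact ℝ) (𝓝 ((∫ ξ, (‖a ξ‖ ^ 2 + ‖b ξ‖ ^ 2)) / 2)) := by
    simp only [PtEq]
    simpa using tendsto_const_nhds.add hRe
  refine ⟨part1, Plim, ?_⟩
  have hKfun : (fun t : ℝ =>
      ∫ ξ, ‖-((Real.sin (t * ‖ξ‖) : ℂ) * a ξ) + (Real.cos (t * ‖ξ‖) : ℂ) * b ξ‖ ^ 2)
      = fun t : ℝ => (∫ ξ, (‖a ξ‖ ^ 2 + ‖b ξ‖ ^ 2))
        - ∫ ξ, ‖(Real.cos (t * ‖ξ‖) : ℂ) * a ξ + (Real.sin (t * ‖ξ‖) : ℂ) * b ξ‖ ^ 2 := by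
    funext t
    have := part1 t
    linarith
  rw [hKfun]
  have hfin : Tendsto (fun t : ℝ => (∫ ξ, (‖a ξ‖ ^ 2 + ‖b ξ‖ ^ 2))
      - ∫ ξ, ‖(Real.cos (t * ‖ξ‖) : ℂ) * a ξ + (Real.sin (t * ‖ξ‖) : ℂ) * b ξ‖ ^ 2)
      (cocompact ℝ) (𝓝 ((∫ ξ, (‖a ξ‖ ^ 2 + ‖b ξ‖ ^ 2))
        - (∫ ξ, (‖a ξ‖ ^ 2 + ‖b ξ‖ ^ 2)) / 2)) := tendsto_const_nhds.sub Plim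
  rw [show (∫ ξ, (‖a ξ‖ ^ 2 + ‖b ξ‖ ^ 2))
      - (∫ ξ, (‖a ξ‖ ^ 2 + ‖b ξ‖ ^ 2)) / 2 = (∫ ξ, (‖a ξ‖ ^ 2 + ‖b ξ‖ ^ 2)) / 2 by ring] at hfin
  exact hfin
end

section
/- Abstract equipartition from the Riemann–Lebesgue property for a one-parameter unitary group: let H be a complex Hilbert space and R : ℝ → (H →L[ℂ] H) satisfy R(0) = id, R(t+s) = R(t) ∘ R(s) and R(t)* = R(−t) for all real t, s (so each R(t) is unitary). Assume the Riemann–Lebesgue property: for all x, y ∈ H, ⟨R(t)x, y⟩ → 0 as |t| → ∞. Define C(t) = (1/2)(R(t) + R(−t)) and S(t) = (2i)^{−1}(R(t) − R(−t)). Then for all x, y ∈ H: (i) ⟨C(τ)x, C(τ)y⟩ → (1/2)⟨x, y⟩ and ⟨S(τ)x, S(τ)y⟩ → (1/2)⟨x, y⟩ as |τ| → ∞; (ii) for fixed nonzero reals t, s with |t| ≠ |s|, ⟨C(τ t)x, C(τ s)y⟩ → 0 and ⟨S(τ t)x, S(τ s)y⟩ → 0 as τ → ∞. -/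
open MeasureTheory Filter
open scoped ComplexInnerProductSpace

private lemma mul_const_cocompact (c : ℝ) (hc : c ≠ 0) :
    Tendsto (fun τ : ℝ => τ * c) (cocompact ℝ) (cocompact ℝ) := by
  rw [cocompact_eq_atBot_atTop, tendsto_sup]
  rcases hc.lt_or_gt with h | h
  · exact ⟨(tendsto_id.atBot_mul_const_of_neg h).mono_right le_sup_right,
      (tendsto_id.atTop_mul_const_of_neg h).mono_right le_sup_left⟩
  · exact ⟨(tendsto_id.atBot_mul_const h).mono_right le_sup_left,
      (tendsto_id.atTop_mul_const h).mono_right le_sup_right⟩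

private lemma mul_const_atTop_cocompact (c : ℝ) (hc : c ≠ 0) :
    Tendsto (fun τ : ℝ => τ * c) atTop (cocompact ℝ) := by
  rw [cocompact_eq_atBot_atTop]
  rcases hc.lt_or_gt with h | h
  · exact (tendsto_id.atTop_mul_const_of_neg h).mono_right le_sup_left
  · exact (tendsto_id.atTop_mul_const h).mono_right le_sup_right

/-- **Abstract equipartition from the Riemann–Lebesgue property of a one-parameter unitary
group.** Let `R : ℝ → (H →L[ℂ] H)` be a one-parameter group of unitary operators
(`R 0 = id`, `R (t+s) = R t ∘ R s`, `R t * = R (−t)`) on a complex Hilbert space satisfying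
the Riemann–Lebesgue property `⟪R t x, y⟫ → 0` as `|t| → ∞`. With
`C t = (1/2)(R t + R (−t))` and `S t = (2i)⁻¹(R t − R (−t))`:
(i) `⟪C τ x, C τ y⟫ → (1/2)⟪x,y⟫` and `⟪S τ x, S τ y⟫ → (1/2)⟪x,y⟫` as `|τ| → ∞`;
(ii) for fixed nonzero `t, s` with `|t| ≠ |s|`, `⟪C (τt) x, C (τs) y⟫ → 0` and
`⟪S (τt) x, S (τs) y⟫ → 0` as `τ → ∞`. -/
theorem abstract_equipartition_of_riemann_lebesgue
    {H : Type*} [NormedAddCommGroup H] [InnerProductSpace ℂ H] [CompleteSpace H]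
    (R : ℝ → H →L[ℂ] H)
    (hR0 : R 0 = ContinuousLinearMap.id ℂ H)
    (hRadd : ∀ t s : ℝ, R (t + s) = (R t).comp (R s))
    (hRstar : ∀ t : ℝ, ContinuousLinearMap.adjoint (R t) = R (-t))
    (hRL : ∀ x y : H, Tendsto (fun t : ℝ => ⟪R t x, y⟫) (cocompact ℝ) (nhds 0)) :
    (∀ x y : H,
      Tendsto (fun τ : ℝ =>
          ⟪((1 / 2 : ℂ) • (R τ + R (-τ))) x, ((1 / 2 : ℂ) • (R τ + R (-τ))) y⟫)
        (cocompact ℝ) (nhds ((1 / 2 : ℂ) * ⟪x, y⟫)) ∧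
      Tendsto (fun τ : ℝ =>
          ⟪((2 * Complex.I)⁻¹ • (R τ - R (-τ))) x,
            ((2 * Complex.I)⁻¹ • (R τ - R (-τ))) y⟫)
        (cocompact ℝ) (nhds ((1 / 2 : ℂ) * ⟪x, y⟫))) ∧
    (∀ x y : H, ∀ t s : ℝ, t ≠ 0 → s ≠ 0 → |t| ≠ |s| →
      Tendsto (fun τ : ℝ =>
          ⟪((1 / 2 : ℂ) • (R (τ * t) + R (-(τ * t)))) x,
            ((1 / 2 : ℂ) • (R (τ * s) + R (-(τ * s)))) y⟫)
        atTop (nhds 0) ∧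
      Tendsto (fun τ : ℝ =>
          ⟪((2 * Complex.I)⁻¹ • (R (τ * t) - R (-(τ * t)))) x,
            ((2 * Complex.I)⁻¹ • (R (τ * s) - R (-(τ * s)))) y⟫)
        atTop (nhds 0)) := by
  have key : ∀ (a b : ℝ) (x y : H), ⟪R a x, R b y⟫ = ⟪R (a - b) x, y⟫ := by
    intro a b x y
    have h1 : ⟪R a x, R b y⟫ = ⟪(ContinuousLinearMap.adjoint (R b)) (R a x), y⟫ :=
      (ContinuousLinearMap.adjoint_inner_left (R b) y (R a x)).symm
    rw [h1, hRstar]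
    have h2 : R (a - b) = (R (-b)).comp (R a) := by
      rw [← hRadd]; congr 1; ring
    rw [h2, ContinuousLinearMap.comp_apply]
  refine ⟨fun x y => ?_, fun x y t s ht hs hts => ?_⟩
  · constructor
    · have e : ∀ τ : ℝ,
          ⟪((1 / 2 : ℂ) • (R τ + R (-τ))) x, ((1 / 2 : ℂ) • (R τ + R (-τ))) y⟫
            = (1 / 2 : ℂ) * ⟪x, y⟫ + (1 / 4 : ℂ) * ⟪R (τ * 2) x, y⟫
              + (1 / 4 : ℂ) * ⟪R (τ * (-2)) x, y⟫ := by
        intro τ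
        simp only [ContinuousLinearMap.smul_apply, ContinuousLinearMap.add_apply,
          inner_smul_left, inner_smul_right, inner_add_left, inner_add_right, key]
        rw [show τ - τ = 0 by ring, show -τ - -τ = 0 by ring,
          show τ - -τ = τ * 2 by ring, show -τ - τ = τ * (-2) by ring, hR0]
        simp only [ContinuousLinearMap.id_apply, map_div₀, map_one, map_ofNat]
        ring
      have h2 := ((hRL x y).comp (mul_const_cocompact 2 (by norm_num))).const_mul (1/4 : ℂ)
      have h3 := ((hRL x y).comp (mul_const_cocompact (-2) (by norm_num))).const_mul (1/4 : ℂ)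
      have h1 : Tendsto (fun _ : ℝ => (1 / 2 : ℂ) * ⟪x, y⟫) (cocompact ℝ)
          (nhds ((1 / 2 : ℂ) * ⟪x, y⟫)) := tendsto_const_nhds
      have := (h1.add h2).add h3
      simp only [mul_zero, add_zero] at this
      exact this.congr fun τ => (e τ).symm
    · have e : ∀ τ : ℝ,
          ⟪((2 * Complex.I)⁻¹ • (R τ - R (-τ))) x, ((2 * Complex.I)⁻¹ • (R τ - R (-τ))) y⟫
            = (1 / 2 : ℂ) * ⟪x, y⟫ + (-(1 / 4) : ℂ) * ⟪R (τ * 2) x, y⟫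
              + (-(1 / 4) : ℂ) * ⟪R (τ * (-2)) x, y⟫ := by
        intro τ
        simp only [ContinuousLinearMap.smul_apply, ContinuousLinearMap.sub_apply,
          inner_smul_left, inner_smul_right, inner_sub_left, inner_sub_right, key]
        rw [show τ - τ = 0 by ring, show -τ - -τ = 0 by ring,
          show τ - -τ = τ * 2 by ring, show -τ - τ = τ * (-2) by ring, hR0]
        simp only [ContinuousLinearMap.id_apply, map_inv₀, map_mul, Complex.conj_I, map_ofNat]
        have hI : Complex.I ≠ 0 := Complex.I_ne_zero
        field_simp
        ring_nf
        simp [Complex.I_sq]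
      have h2 := ((hRL x y).comp (mul_const_cocompact 2 (by norm_num))).const_mul (-(1/4) : ℂ)
      have h3 := ((hRL x y).comp (mul_const_cocompact (-2) (by norm_num))).const_mul (-(1/4) : ℂ)
      have h1 : Tendsto (fun _ : ℝ => (1 / 2 : ℂ) * ⟪x, y⟫) (cocompact ℝ)
          (nhds ((1 / 2 : ℂ) * ⟪x, y⟫)) := tendsto_const_nhds
      have := (h1.add h2).add h3
      simp only [mul_zero, add_zero] at this
      exact this.congr fun τ => (e τ).symm
  · have hts' : t - s ≠ 0 := sub_ne_zero.mpr fun h => hts (by rw [h])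
    have hst' : s - t ≠ 0 := sub_ne_zero.mpr fun h => hts (by rw [h])
    have hts'' : t + s ≠ 0 := fun h => hts (by rw [show t = -s by linarith, abs_neg])
    have l1 := (hRL x y).comp (mul_const_atTop_cocompact (t - s) hts')
    have l2 := (hRL x y).comp (mul_const_atTop_cocompact (t + s) hts'')
    have l3 := (hRL x y).comp (mul_const_atTop_cocompact (-(t + s)) (neg_ne_zero.mpr hts''))
    have l4 := (hRL x y).comp (mul_const_atTop_cocompact (s - t) hst')
    constructor
    · have e : ∀ τ : ℝ,
          ⟪((1 / 2 : ℂ) • (R (τ * t) + R (-(τ * t)))) x,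
            ((1 / 2 : ℂ) • (R (τ * s) + R (-(τ * s)))) y⟫
            = (1 / 4 : ℂ) * (⟪R (τ * (t - s)) x, y⟫ + ⟪R (τ * (t + s)) x, y⟫
              + ⟪R (τ * (-(t + s))) x, y⟫ + ⟪R (τ * (s - t)) x, y⟫) := by
        intro τ
        simp only [ContinuousLinearMap.smul_apply, ContinuousLinearMap.add_apply,
          inner_smul_left, inner_smul_right, inner_add_left, inner_add_right, key]
        rw [show τ * t - τ * s = τ * (t - s) by ring,
          show τ * t - -(τ * s) = τ * (t + s) by ring,
          show -(τ * t) - τ * s = τ * (-(t + s)) by ring,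
          show -(τ * t) - -(τ * s) = τ * (s - t) by ring]
        simp only [map_div₀, map_one, map_ofNat]
        ring
      have := (((l1.add l2).add l3).add l4).const_mul (1/4 : ℂ)
      simp only [add_zero, mul_zero] at this
      exact this.congr fun τ => (e τ).symm
    · have e : ∀ τ : ℝ,
          ⟪((2 * Complex.I)⁻¹ • (R (τ * t) - R (-(τ * t)))) x,
            ((2 * Complex.I)⁻¹ • (R (τ * s) - R (-(τ * s)))) y⟫
            = (1 / 4 : ℂ) * (⟪R (τ * (t - s)) x, y⟫ - ⟪R (τ * (t + s)) x, y⟫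
              - ⟪R (τ * (-(t + s))) x, y⟫ + ⟪R (τ * (s - t)) x, y⟫) := by
        intro τ
        simp only [ContinuousLinearMap.smul_apply, ContinuousLinearMap.sub_apply,
          inner_smul_left, inner_smul_right, inner_sub_left, inner_sub_right, key]
        rw [show τ * t - τ * s = τ * (t - s) by ring,
          show τ * t - -(τ * s) = τ * (t + s) by ring,
          show -(τ * t) - τ * s = τ * (-(t + s)) by ring,
          show -(τ * t) - -(τ * s) = τ * (s - t) by ring]
        simp only [map_inv₀, map_mul, Complex.conj_I, map_ofNat]
        field_simp
        ring_nf
        simp [Complex.I_sq]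
        ring
      have := (((l1.sub l2).sub l3).add l4).const_mul (1/4 : ℂ)
      simp only [add_zero, sub_zero, mul_zero] at this
      exact this.congr fun τ => (e τ).symm
end

section
/- Vanishing of the off-diagonal rescaled covariance (Example 4.6): let g : ℝ → ℂ be integrable, a > 0, and 0 ≤ s < t. Then ∫_ℝ ( ∫_0^s sin( δ^{−1}(t − r) a |ξ| ) · sin( δ^{−1}(s − r) a |ξ| ) dr ) g(ξ) dξ → 0 as δ → 0⁺. -/
set_option maxHeartbeats 1000000


open MeasureTheory Filter intervalIntegral

open scoped Real FourierTransform Topology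

/-- Explicit antiderivative computation for the product of sines. -/
lemma sin_mul_sin_integral (c s t : ℝ) (hc : c ≠ 0) :
    (∫ r in (0:ℝ)..s, Real.sin (c*(t-r)) * Real.sin (c*(s-r)))
      = s/2 * Real.cos (c*(t-s)) + (Real.sin (c*(t-s)) - Real.sin (c*(t+s)))/(4*c) := by
  have hderiv : ∀ r ∈ Set.uIcc (0:ℝ) s,
      HasDerivAt (fun r => r/2 * Real.cos (c*(t-s)) + Real.sin (c*(t+s) - 2*c*r)/(4*c))
        (Real.sin (c*(t-r)) * Real.sin (c*(s-r))) r := by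
    intro r _
    have h1 : HasDerivAt (fun r : ℝ => r/2 * Real.cos (c*(t-s)))
        ((1/2) * Real.cos (c*(t-s))) r :=
      ((hasDerivAt_id r).div_const 2).mul_const _
    have hin : HasDerivAt (fun r : ℝ => c*(t+s) - 2*c*r) (0 - 2*c*1) r :=
      (hasDerivAt_const r (c*(t+s))).sub ((hasDerivAt_id r).const_mul (2*c))
    have h2 : HasDerivAt (fun r : ℝ => Real.sin (c*(t+s) - 2*c*r))
        (Real.cos (c*(t+s) - 2*c*r) * (0 - 2*c*1)) r :=
      (Real.hasDerivAt_sin _).comp r hin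
    have h := h1.add (h2.div_const (4*c))
    refine h.congr_deriv ?_
    have hA : c*(t+s) - 2*c*r = c*(t-r) + c*(s-r) := by ring
    have hB : c*(t-s) = c*(t-r) - c*(s-r) := by ring
    rw [hA, hB, Real.cos_add, Real.cos_sub]
    field_simp
    ring
  have hint : IntervalIntegrable (fun r => Real.sin (c*(t-r)) * Real.sin (c*(s-r)))
      volume 0 s := (Continuous.mul (by fun_prop) (by fun_prop)).intervalIntegrable _ _
  rw [intervalIntegral.integral_eq_sub_of_hasDerivAt hderiv hint,
    show c*(t+s) - 2*c*s = c*(t-s) from by ring,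
    show c*(t+s) - 2*c*0 = c*(t+s) from by ring]
  ring

/-- Riemann–Lebesgue for the cosine kernel. -/
lemma tendsto_integral_cos_mul (g : ℝ → ℂ) (hg : Integrable g) :
    Tendsto (fun w : ℝ => ∫ v : ℝ, ((Real.cos (w * v) : ℝ) : ℂ) * g v) atTop (𝓝 0) := by
  have h := Real.tendsto_integral_exp_smul_cocompact g
  have h1 : Tendsto (fun w : ℝ => w / (2*Real.pi)) atTop (cocompact ℝ) := by
    rw [cocompact_eq_atBot_atTop]
    exact (tendsto_id.atTop_div_const (by positivity)).mono_right le_sup_right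
  have h2 : Tendsto (fun w : ℝ => -(w / (2*Real.pi))) atTop (cocompact ℝ) := by
    rw [cocompact_eq_atBot_atTop]
    exact (tendsto_neg_atTop_atBot.comp (tendsto_id.atTop_div_const (by positivity))).mono_right
      le_sup_left
  have key : ∀ w : ℝ, (∫ v : ℝ, ((Real.cos (w * v) : ℝ) : ℂ) * g v)
      = (2:ℂ)⁻¹ * (∫ v : ℝ, 𝐞 (-(v * (w / (2*Real.pi)))) • g v)
        + (2:ℂ)⁻¹ * (∫ v : ℝ, 𝐞 (-(v * (-(w / (2*Real.pi))))) • g v) := by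
    intro w
    have i1 : Integrable (fun v : ℝ => 𝐞 (-(v * (w / (2*Real.pi)))) • g v) :=
      (Real.fourierIntegral_convergent_iff' (ContinuousLinearMap.mul ℝ ℝ) _).2 hg
    have i2 : Integrable (fun v : ℝ => 𝐞 (-(v * (-(w / (2*Real.pi))))) • g v) :=
      (Real.fourierIntegral_convergent_iff' (ContinuousLinearMap.mul ℝ ℝ) _).2 hg
    rw [← MeasureTheory.integral_const_mul, ← MeasureTheory.integral_const_mul, ← integral_add (i1.const_mul _)
      (i2.const_mul _)]
    refine integral_congr_ae (Eventually.of_forall fun v => ?_)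
    simp only [Circle.smul_def, Real.fourierChar_apply]
    have e1 : 2 * Real.pi * -(v * (w / (2*Real.pi))) = -(w * v) := by
      field_simp
    have e2 : 2 * Real.pi * -(v * (-(w / (2*Real.pi)))) = w * v := by
      field_simp
    rw [e1, e2, Complex.ofReal_cos]
    rw [Complex.cos]
    simp only [neg_mul, smul_eq_mul]
    push_cast
    ring_nf
  refine Tendsto.congr (fun w => (key w).symm) ?_
  have := ((h.comp h1).const_mul ((2:ℂ)⁻¹)).add ((h.comp h2).const_mul ((2:ℂ)⁻¹))
  simpa using this

/-- **Vanishing of the off-diagonal rescaled covariance (Example 4.6).** For integrable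
`g : ℝ → ℂ`, `a > 0` and `0 ≤ s < t`:
`∫_ℝ (∫₀ˢ sin(δ⁻¹(t−r)a|ξ|) sin(δ⁻¹(s−r)a|ξ|) dr) g(ξ) dξ → 0` as `δ → 0⁺`. -/
theorem offdiagonal_rescaled_covariance_vanishes (g : ℝ → ℂ) (hg : Integrable g)
    (a : ℝ) (ha : 0 < a) (s t : ℝ) (hs : 0 ≤ s) (hst : s < t) :
    Tendsto (fun δ : ℝ => ∫ ξ : ℝ,
        (((∫ r in (0 : ℝ)..s,
            Real.sin (δ⁻¹ * (t - r) * a * |ξ|) * Real.sin (δ⁻¹ * (s - r) * a * |ξ|)) : ℝ) : ℂ)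
          * g ξ)
      (nhdsWithin 0 (Set.Ioi 0)) (nhds 0) := by
  have hts : (0:ℝ) < t - s := sub_pos.2 hst
  -- the two explicit pieces of the inner integral
  set f1 : ℝ → ℝ → ℝ := fun δ ξ => s/2 * Real.cos (δ⁻¹ * (a*(t-s)) * ξ) with hf1
  set f2 : ℝ → ℝ → ℝ := fun δ ξ =>
    (Real.sin (δ⁻¹*a*|ξ| * (t-s)) - Real.sin (δ⁻¹*a*|ξ| * (t+s))) / (4*(δ⁻¹*a*|ξ|)) with hf2
  -- uniform bounds
  have hb1 : ∀ δ ξ, |f1 δ ξ| ≤ s/2 := by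
    intro δ ξ
    rw [hf1, abs_mul, abs_of_nonneg (by linarith : (0:ℝ) ≤ s/2)]
    calc s/2 * |Real.cos (δ⁻¹ * (a*(t-s)) * ξ)| ≤ s/2 * 1 := by
          gcongr; exact Real.abs_cos_le_one _
      _ = s/2 := mul_one _
  have hsin_lip : ∀ x y : ℝ, |Real.sin x - Real.sin y| ≤ |x - y| := by
    intro x y
    rw [Real.sin_sub_sin]
    calc |2 * Real.sin ((x-y)/2) * Real.cos ((x+y)/2)|
        = 2 * |Real.sin ((x-y)/2)| * |Real.cos ((x+y)/2)| := by
          rw [abs_mul, abs_mul, abs_two]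
      _ ≤ 2 * |(x-y)/2| * 1 :=
          mul_le_mul (mul_le_mul_of_nonneg_left Real.abs_sin_le_abs (by norm_num))
            (Real.abs_cos_le_one _) (abs_nonneg _) (by positivity)
      _ = |x - y| := by rw [abs_div, abs_two]; ring
  have hb2 : ∀ δ ξ, |f2 δ ξ| ≤ s/2 := by
    intro δ ξ
    set c : ℝ := δ⁻¹*a*|ξ| with hc
    rcases eq_or_ne c 0 with h | h
    · simp [hf2, ← hc, h]; linarith
    · have hcpos : 0 < |c| := abs_pos.2 h
      have hnum : |Real.sin (c*(t-s)) - Real.sin (c*(t+s))| ≤ |c| * (2*s) := by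
        refine (hsin_lip _ _).trans ?_
        rw [show c*(t-s) - c*(t+s) = -(c*(2*s)) from by ring, abs_neg, abs_mul,
          abs_of_nonneg (by linarith : (0:ℝ) ≤ 2*s)]
      rw [hf2]
      simp only
      rw [abs_div, show |4*c| = 4*|c| from by rw [abs_mul]; norm_num]
      calc |Real.sin (c*(t-s)) - Real.sin (c*(t+s))| / (4*|c|)
          ≤ (|c| * (2*s)) / (4*|c|) := by gcongr
        _ = s/2 := by field_simp; ring
  -- measurability of the pieces
  have hm1 : ∀ δ, AEStronglyMeasurable (fun ξ => ((f1 δ ξ : ℝ) : ℂ)) volume :=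
    fun δ => (Continuous.aestronglyMeasurable (by fun_prop))
  have hm2 : ∀ δ, AEStronglyMeasurable (fun ξ => ((f2 δ ξ : ℝ) : ℂ)) volume := by
    intro δ
    refine (Complex.measurable_ofReal.comp ?_).aestronglyMeasurable
    apply Measurable.div <;> fun_prop
  -- integrability of the pieces
  have hi1 : ∀ δ, Integrable (fun ξ => ((f1 δ ξ : ℝ) : ℂ) * g ξ) := by
    intro δ
    refine hg.bdd_mul (c := s/2) (hm1 δ) (Eventually.of_forall fun ξ => ?_)
    rw [Complex.norm_real, Real.norm_eq_abs]; exact hb1 δ ξ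
  have hi2 : ∀ δ, Integrable (fun ξ => ((f2 δ ξ : ℝ) : ℂ) * g ξ) := by
    intro δ
    refine hg.bdd_mul (c := s/2) (hm2 δ) (Eventually.of_forall fun ξ => ?_)
    rw [Complex.norm_real, Real.norm_eq_abs]; exact hb2 δ ξ
  -- a.e. every point is nonzero
  have hae : ∀ᵐ ξ : ℝ, ξ ≠ 0 := by
    refine ae_iff.2 ?_
    simp only [ne_eq, not_not, Set.setOf_eq_eq_singleton]
    exact Real.volume_singleton
  -- eventually (for δ > 0) the integral equals the explicit formula
  have hcongr : ∀ᶠ δ in nhdsWithin (0:ℝ) (Set.Ioi 0), (∫ ξ : ℝ,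
        (((∫ r in (0 : ℝ)..s,
            Real.sin (δ⁻¹ * (t - r) * a * |ξ|) * Real.sin (δ⁻¹ * (s - r) * a * |ξ|)) : ℝ) : ℂ)
          * g ξ)
      = ∫ ξ : ℝ, (((f1 δ ξ : ℝ) : ℂ) * g ξ + ((f2 δ ξ : ℝ) : ℂ) * g ξ) := by
    filter_upwards [self_mem_nhdsWithin] with δ hδ
    have hδ0 : (0:ℝ) < δ := hδ
    refine integral_congr_ae ?_
    filter_upwards [hae] with ξ hξ
    have hcpos : (0:ℝ) < δ⁻¹*a*|ξ| :=
      mul_pos (mul_pos (inv_pos.2 hδ0) ha) (abs_pos.2 hξ)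
    have hinner : (∫ r in (0 : ℝ)..s,
        Real.sin (δ⁻¹ * (t - r) * a * |ξ|) * Real.sin (δ⁻¹ * (s - r) * a * |ξ|))
        = ∫ r in (0 : ℝ)..s,
          Real.sin ((δ⁻¹*a*|ξ|) * (t - r)) * Real.sin ((δ⁻¹*a*|ξ|) * (s - r)) := by
      congr 1
      funext r
      rw [show δ⁻¹ * (t - r) * a * |ξ| = (δ⁻¹*a*|ξ|) * (t - r) from by ring,
        show δ⁻¹ * (s - r) * a * |ξ| = (δ⁻¹*a*|ξ|) * (s - r) from by ring]
    rw [hinner, sin_mul_sin_integral _ s t hcpos.ne']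
    have hcos : Real.cos (δ⁻¹*a*|ξ| * (t-s)) = Real.cos (δ⁻¹ * (a*(t-s)) * ξ) := by
      rw [← Real.cos_abs (δ⁻¹*a*|ξ| * (t-s)), ← Real.cos_abs (δ⁻¹ * (a*(t-s)) * ξ)]
      congr 1
      rw [abs_mul (δ⁻¹ * (a*(t-s))) ξ,
        abs_of_pos (by positivity : (0:ℝ) < δ⁻¹ * (a*(t-s))),
        abs_of_pos (by positivity : (0:ℝ) < δ⁻¹*a*|ξ| * (t-s))]
      ring
    rw [hcos, hf1, hf2]
    push_cast
    ring
  refine Tendsto.congr' (hcongr.mono fun δ h => h.symm) ?_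
  -- split the integral
  have hsplit : ∀ δ : ℝ, (∫ ξ : ℝ, (((f1 δ ξ : ℝ) : ℂ) * g ξ + ((f2 δ ξ : ℝ) : ℂ) * g ξ))
      = (∫ ξ : ℝ, ((f1 δ ξ : ℝ) : ℂ) * g ξ) + ∫ ξ : ℝ, ((f2 δ ξ : ℝ) : ℂ) * g ξ :=
    fun δ => integral_add (hi1 δ) (hi2 δ)
  -- first piece tends to zero by Riemann–Lebesgue
  have h1 : Tendsto (fun δ : ℝ => ∫ ξ : ℝ, ((f1 δ ξ : ℝ) : ℂ) * g ξ)
      (nhdsWithin 0 (Set.Ioi 0)) (nhds 0) := by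
    have hw : Tendsto (fun δ : ℝ => δ⁻¹ * (a*(t-s))) (nhdsWithin 0 (Set.Ioi 0)) atTop :=
      tendsto_inv_nhdsGT_zero.atTop_mul_const (by positivity)
    have hRL := (tendsto_integral_cos_mul g hg).comp hw
    have heq : ∀ δ : ℝ, (∫ ξ : ℝ, ((f1 δ ξ : ℝ) : ℂ) * g ξ)
        = ((s:ℂ)/2) * ∫ ξ : ℝ, ((Real.cos (δ⁻¹ * (a*(t-s)) * ξ) : ℝ) : ℂ) * g ξ := by
      intro δ
      rw [← MeasureTheory.integral_const_mul]
      congr 1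
      funext ξ
      rw [hf1]
      push_cast
      ring
    rw [show (0:ℂ) = ((s:ℂ)/2) * 0 from by ring]
    exact Tendsto.congr (fun δ => (heq δ).symm) (hRL.const_mul _)
  -- second piece tends to zero by dominated convergence
  have h2 : Tendsto (fun δ : ℝ => ∫ ξ : ℝ, ((f2 δ ξ : ℝ) : ℂ) * g ξ)
      (nhdsWithin 0 (Set.Ioi 0)) (nhds 0) := by
    have := tendsto_integral_filter_of_dominated_convergence
      (μ := volume) (l := nhdsWithin (0:ℝ) (Set.Ioi 0))
      (F := fun δ ξ => ((f2 δ ξ : ℝ) : ℂ) * g ξ) (f := fun _ => (0:ℂ))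
      (bound := fun ξ => s/2 * ‖g ξ‖)
      (Eventually.of_forall fun δ => (hi2 δ).aestronglyMeasurable)
      (Eventually.of_forall fun δ => Eventually.of_forall fun ξ => by
        rw [norm_mul, Complex.norm_real, Real.norm_eq_abs]
        exact mul_le_mul_of_nonneg_right (hb2 δ ξ) (norm_nonneg _))
      (hg.norm.const_mul (s/2))
      ?_
    · simpa using this
    · filter_upwards [hae] with ξ hξ
      refine squeeze_zero_norm' (a := fun δ : ℝ => δ * (‖g ξ‖ / (2*a*|ξ|))) ?_ ?_
      · filter_upwards [self_mem_nhdsWithin] with δ (hδ : (0:ℝ) < δ)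
        have hcpos : (0:ℝ) < δ⁻¹*a*|ξ| :=
          mul_pos (mul_pos (inv_pos.2 hδ) ha) (abs_pos.2 hξ)
        have hnum : |Real.sin (δ⁻¹*a*|ξ| * (t-s)) - Real.sin (δ⁻¹*a*|ξ| * (t+s))| ≤ 2 := by
          calc |Real.sin (δ⁻¹*a*|ξ| * (t-s)) - Real.sin (δ⁻¹*a*|ξ| * (t+s))|
              ≤ |Real.sin (δ⁻¹*a*|ξ| * (t-s))| + |Real.sin (δ⁻¹*a*|ξ| * (t+s))| :=
                abs_sub _ _
            _ ≤ 1 + 1 := add_le_add (Real.abs_sin_le_one _) (Real.abs_sin_le_one _)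
            _ = 2 := by norm_num
        rw [norm_mul, Complex.norm_real, Real.norm_eq_abs, hf2]
        simp only
        calc |(Real.sin (δ⁻¹*a*|ξ| * (t-s)) - Real.sin (δ⁻¹*a*|ξ| * (t+s)))
              / (4*(δ⁻¹*a*|ξ|))| * ‖g ξ‖
            = |Real.sin (δ⁻¹*a*|ξ| * (t-s)) - Real.sin (δ⁻¹*a*|ξ| * (t+s))|
              / (4*(δ⁻¹*a*|ξ|)) * ‖g ξ‖ := by
              rw [abs_div, abs_of_pos (by positivity : (0:ℝ) < 4*(δ⁻¹*a*|ξ|))]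
          _ ≤ 2 / (4*(δ⁻¹*a*|ξ|)) * ‖g ξ‖ := by gcongr
          _ = δ * (‖g ξ‖ / (2*a*|ξ|)) := by
              rw [show 2 / (4*(δ⁻¹*a*|ξ|)) = δ / (2*a*|ξ|) from by
                field_simp; ring]
              ring
      · have : Tendsto (fun δ : ℝ => δ) (nhdsWithin 0 (Set.Ioi 0)) (nhds 0) :=
          (continuous_id.tendsto 0).mono_left nhdsWithin_le_nhds
        simpa using this.mul_const (‖g ξ‖ / (2*a*|ξ|))
  have := h1.add h2
  rw [add_zero] at this
  exact Tendsto.congr (fun δ => (hsplit δ).symm) this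
end

section
/- Vanishing of the variance of the rescaled observed Fisher information (equation (4.14), analytic form): let g : ℝ → ℂ be integrable, a > 0 and T > 0. For δ > 0 define Φ_δ(t, s) = ∫_ℝ ( ∫_0^{min(t,s)} sin( δ^{−1}(t − r) a |ξ| ) · sin( δ^{−1}(s − r) a |ξ| ) dr ) g(ξ) dξ. Then ∫_0^T ∫_0^T |Φ_δ(t, s)|² ds dt → 0 as δ → 0⁺. -/
open MeasureTheory Filter intervalIntegral Real
open scoped FourierTransform Topology
set_option maxHeartbeats 1000000

noncomputable def Efun (a t s δ ξ : ℝ) : ℝ :=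
  min t s * (Real.cos (δ⁻¹ * a * |ξ| * (t - s)) / 2) +
    (Real.sin (δ⁻¹ * a * |ξ| * (t+s) - 2 * (δ⁻¹ * a * |ξ|) * min t s) - Real.sin (δ⁻¹ * a * |ξ| * (t+s)))
      * (4 * (δ⁻¹ * a * |ξ|))⁻¹

lemma inner_eq {A : ℝ} (hA : A ≠ 0) (t s m : ℝ) :
    ∫ r in (0:ℝ)..m, Real.sin (A * (t - r)) * Real.sin (A * (s - r)) =
      m * (Real.cos (A * (t - s)) / 2) +
        (Real.sin (A*(t+s) - 2*A*m) - Real.sin (A*(t+s))) * (4*A)⁻¹ := by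
  have key : ∀ x : ℝ, HasDerivAt
      (fun r => r * (Real.cos (A * (t - s)) / 2) + Real.sin (A*(t+s) - 2*A*r) * (4*A)⁻¹)
      (Real.sin (A * (t - x)) * Real.sin (A * (s - x))) x := by
    intro x
    have h1 : HasDerivAt (fun r : ℝ => r * (Real.cos (A * (t - s)) / 2))
        (Real.cos (A * (t - s)) / 2) x := by
      simpa using (hasDerivAt_id x).mul_const (Real.cos (A * (t - s)) / 2)
    have h2 : HasDerivAt (fun r : ℝ => A*(t+s) - 2*A*r) (-(2*A)) x := by
      simpa using ((hasDerivAt_id x).const_mul (2*A)).const_sub (A*(t+s))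
    have h3 : HasDerivAt (fun r : ℝ => Real.sin (A*(t+s) - 2*A*r) * (4*A)⁻¹)
        ((Real.cos (A*(t+s) - 2*A*x) * (-(2*A))) * (4*A)⁻¹) x :=
      (h2.sin).mul_const _
    have hsum := h1.add h3
    refine hsum.congr_deriv (Eq.symm ?_)
    have hc : Real.cos (A*(t-s)) - Real.cos (A*(t+s) - 2*A*x)
        = 2 * Real.sin (A*(t-x)) * Real.sin (A*(s-x)) := by
      rw [Real.cos_sub_cos]
      have e1 : (A*(t-s) + (A*(t+s) - 2*A*x))/2 = A*(t-x) := by ring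
      have e2 : (A*(t-s) - (A*(t+s) - 2*A*x))/2 = -(A*(s-x)) := by ring
      rw [e1, e2, Real.sin_neg]
      ring
    have h5 : (-(2*A)) * (4*A)⁻¹ = -(1/2 : ℝ) := by field_simp; ring
    rw [mul_assoc, h5]
    linarith [hc]
  have hcont : IntervalIntegrable (fun r => Real.sin (A * (t - r)) * Real.sin (A * (s - r)))
      MeasureTheory.volume 0 m := by
    apply Continuous.intervalIntegrable
    fun_prop
  have := intervalIntegral.integral_eq_sub_of_hasDerivAt (fun x _ => key x) hcont
  rw [this]
  ring_nf

lemma Efun_eq_integral {a δ ξ : ℝ} (ha : a ≠ 0) (hδ : δ ≠ 0) (hξ : ξ ≠ 0) (t s : ℝ) :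
    Efun a t s δ ξ =
      ∫ r in (0:ℝ)..(min t s),
        Real.sin (δ⁻¹ * (t - r) * a * |ξ|) * Real.sin (δ⁻¹ * (s - r) * a * |ξ|) := by
  have hA : δ⁻¹ * a * |ξ| ≠ 0 :=
    mul_ne_zero (mul_ne_zero (inv_ne_zero hδ) ha) (abs_ne_zero.mpr hξ)
  simp only [show ∀ r : ℝ, δ⁻¹ * (t - r) * a * |ξ| = (δ⁻¹ * a * |ξ|) * (t - r) from
      fun r => by ring,
    show ∀ r : ℝ, δ⁻¹ * (s - r) * a * |ξ| = (δ⁻¹ * a * |ξ|) * (s - r) from fun r => by ring]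
  rw [inner_eq hA t s (min t s)]
  rfl

lemma Efun_bound {a δ ξ : ℝ} (ha : a ≠ 0) (hδ : δ ≠ 0) (hξ : ξ ≠ 0) (t s : ℝ) :
    |Efun a t s δ ξ| ≤ |min t s| := by
  rw [Efun_eq_integral ha hδ hξ]
  have h := intervalIntegral.norm_integral_le_of_norm_le_const (a := 0) (b := min t s)
    (C := 1) (f := fun r => Real.sin (δ⁻¹ * (t - r) * a * |ξ|) *
      Real.sin (δ⁻¹ * (s - r) * a * |ξ|)) ?_
  · simpa using h
  · intro x _
    rw [Real.norm_eq_abs, abs_mul]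
    exact mul_le_one₀ (Real.abs_sin_le_one _) (abs_nonneg _) (Real.abs_sin_le_one _)

lemma measurable_Efun (a δ : ℝ) :
    Measurable fun q : (ℝ × ℝ) × ℝ => Efun a q.1.1 q.1.2 δ q.2 := by
  unfold Efun
  fun_prop

lemma measurable_Efun' (a δ t s : ℝ) : Measurable fun ξ : ℝ => Efun a t s δ ξ := by
  unfold Efun
  fun_prop

lemma cos_helper (c ξ : ℝ) : Real.cos (c * |ξ|) = Real.cos (c * ξ) := by
  rcases abs_choice ξ with h | h
  · rw [h]
  · rw [h, mul_neg, Real.cos_neg]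

lemma cos_combine (w ξ : ℝ) (z : ℂ) :
    (Real.cos (w * ξ) : ℂ) * z =
      ((𝐞 (-(ξ * ((2*Real.pi)⁻¹ * w))) : Circle) • z
        + (𝐞 (-(ξ * (-(2*Real.pi)⁻¹ * w))) : Circle) • z) / 2 := by
  have hπ : (2*Real.pi) ≠ 0 := by positivity
  rw [Circle.smul_def, Circle.smul_def, Real.fourierChar_apply, Real.fourierChar_apply]
  have e1 : 2 * Real.pi * (-(ξ * ((2*Real.pi)⁻¹ * w))) = -(w*ξ) := by field_simp
  have e2 : 2 * Real.pi * (-(ξ * (-(2*Real.pi)⁻¹ * w))) = w*ξ := by field_simp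
  rw [e1, e2]
  push_cast
  rw [Complex.exp_mul_I, Complex.exp_mul_I, Complex.cos_neg, Complex.sin_neg]
  simp only [smul_eq_mul]
  ring

lemma RL (g : ℝ → ℂ) (hg : Integrable g) :
    Tendsto (fun w : ℝ => ∫ ξ : ℝ, (Real.cos (w * ξ) : ℂ) * g ξ) (cocompact ℝ) (𝓝 0) := by
  have base := Real.tendsto_integral_exp_smul_cocompact (E := ℂ) g
  have hmul : ∀ c : ℝ, c ≠ 0 → Tendsto (fun w : ℝ => c * w) (cocompact ℝ) (cocompact ℝ) := by
    intro c hc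
    exact le_of_eq ((Homeomorph.mulLeft₀ c hc).map_cocompact (X := ℝ))
  have hπ : (2*Real.pi) ≠ 0 := by positivity
  have h1 := base.comp (hmul ((2*Real.pi)⁻¹) (inv_ne_zero hπ))
  have h2 := base.comp (hmul (-(2*Real.pi)⁻¹) (neg_ne_zero.mpr (inv_ne_zero hπ)))
  have hint : ∀ c : ℝ, Integrable (fun ξ : ℝ => (𝐞 (-(ξ * c)) : Circle) • g ξ) := by
    intro c
    simp_rw [Circle.smul_def, smul_eq_mul]
    apply hg.bdd_mul (c := 1)
    · exact (continuous_subtype_val.comp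
        (Real.continuous_fourierChar.comp (by fun_prop))).aestronglyMeasurable
    · exact Filter.Eventually.of_forall fun x => (Circle.norm_coe _).le
  have hsum := (h1.add h2).div_const (2:ℂ)
  rw [add_zero, zero_div] at hsum
  apply hsum.congr
  intro w
  simp only [Function.comp]
  have hcong : (∫ ξ : ℝ, (Real.cos (w * ξ) : ℂ) * g ξ) =
      ∫ ξ : ℝ, ((𝐞 (-(ξ * ((2*Real.pi)⁻¹ * w))) : Circle) • g ξ
        + (𝐞 (-(ξ * (-(2*Real.pi)⁻¹ * w))) : Circle) • g ξ) / 2 :=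
    integral_congr_ae (Filter.Eventually.of_forall fun ξ => cos_combine w ξ (g ξ))
  rw [hcong, MeasureTheory.integral_div, integral_add (hint _) (hint _)]

lemma ae_ne_zero : ∀ᵐ ξ : ℝ ∂(volume : Measure ℝ), ξ ≠ 0 := by
  rw [MeasureTheory.ae_iff]
  simp only [not_not, Set.setOf_eq_eq_singleton]
  exact Real.volume_singleton

lemma tendsto_F (g : ℝ → ℂ) (hg : Integrable g) (a : ℝ) (ha : 0 < a)
    (t s : ℝ) (hts : t ≠ s) :
    Tendsto (fun δ : ℝ => ∫ ξ : ℝ, ((Efun a t s δ ξ : ℝ) : ℂ) * g ξ)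
      (𝓝[>] (0:ℝ)) (𝓝 0) := by
  set m := min t s with hm
  set M : ℝ → ℝ → ℝ := fun δ ξ => m * (Real.cos ((δ⁻¹ * (a*(t-s))) * ξ) / 2) with hMdef
  have hM : ∀ δ ξ : ℝ, M δ ξ = m * (Real.cos (δ⁻¹ * a * |ξ| * (t - s)) / 2) := by
    intro δ ξ
    have h1 : δ⁻¹ * a * |ξ| * (t-s) = (δ⁻¹ * (a*(t-s))) * |ξ| := by ring
    rw [h1, cos_helper]
  set R : ℝ → ℝ → ℝ := fun δ ξ => Efun a t s δ ξ - M δ ξ with hRdef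
  -- measurability of the pieces for fixed δ
  have hEm : ∀ δ : ℝ, AEStronglyMeasurable (fun ξ : ℝ => ((Efun a t s δ ξ : ℝ) : ℂ) * g ξ)
      volume := by
    intro δ
    have h0 : Measurable fun ξ : ℝ => Efun a t s δ ξ := measurable_Efun' a δ t s
    refine AEStronglyMeasurable.mul ?_ hg.aestronglyMeasurable
    exact (Complex.measurable_ofReal.comp h0).aestronglyMeasurable
  have hMc : ∀ δ : ℝ, Continuous (M δ) := by
    intro δ; exact (continuous_const.mul (((Real.continuous_cos).comp
      (continuous_const.mul continuous_id)).div_const 2))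
  -- integrability for δ > 0
  have hMint : ∀ δ : ℝ, Integrable (fun ξ : ℝ => ((M δ ξ : ℝ) : ℂ) * g ξ) := by
    intro δ
    refine hg.bdd_mul (c := |m|) ?_ ?_
    · exact (Complex.continuous_ofReal.comp (hMc δ)).aestronglyMeasurable
    refine Filter.Eventually.of_forall fun ξ => ?_
    rw [Complex.norm_real, Real.norm_eq_abs]
    simp only [hMdef, abs_mul, abs_div, abs_two]
    nlinarith [Real.abs_cos_le_one (δ⁻¹ * (a*(t-s)) * ξ), abs_nonneg m,
      abs_nonneg (Real.cos (δ⁻¹ * (a*(t-s)) * ξ))]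
  have hEint : ∀ δ : ℝ, 0 < δ → Integrable (fun ξ : ℝ => ((Efun a t s δ ξ : ℝ) : ℂ) * g ξ) := by
    intro δ hδ
    refine Integrable.mono' (hg.norm.const_mul |m|) (hEm δ) ?_
    filter_upwards [ae_ne_zero] with ξ hξ
    rw [norm_mul, Complex.norm_real, Real.norm_eq_abs]
    exact mul_le_mul_of_nonneg_right (Efun_bound (ne_of_gt ha) (ne_of_gt hδ) hξ t s)
      (norm_nonneg _)
  have hRint : ∀ δ : ℝ, 0 < δ → Integrable (fun ξ : ℝ => ((R δ ξ : ℝ) : ℂ) * g ξ) := by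
    intro δ hδ
    have : (fun ξ : ℝ => ((R δ ξ : ℝ) : ℂ) * g ξ) =
        fun ξ => ((Efun a t s δ ξ : ℝ) : ℂ) * g ξ - ((M δ ξ : ℝ) : ℂ) * g ξ := by
      funext ξ; rw [hRdef]; push_cast; ring
    rw [this]
    exact (hEint δ hδ).sub (hMint δ)
  -- main term tendsto
  have hmain : Tendsto (fun δ : ℝ => ∫ ξ : ℝ, ((M δ ξ : ℝ) : ℂ) * g ξ) (𝓝[>] (0:ℝ)) (𝓝 0) := by
    have hco : Tendsto (fun δ : ℝ => δ⁻¹ * (a*(t-s))) (𝓝[>] (0:ℝ)) (cocompact ℝ) := by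
      rcases lt_or_gt_of_ne (sub_ne_zero.mpr hts) with h | h
      · have hc : a * (t - s) < 0 := mul_neg_of_pos_of_neg ha h
        have := tendsto_inv_nhdsGT_zero.atTop_mul_const_of_neg hc
        exact this.mono_right (by rw [cocompact_eq_atBot_atTop]; exact le_sup_left)
      · have hc : 0 < a * (t - s) := mul_pos ha h
        have := tendsto_inv_nhdsGT_zero.atTop_mul_const hc
        exact this.mono_right (by rw [cocompact_eq_atBot_atTop]; exact le_sup_right)
    have hRL := (RL g hg).comp hco
    have heq : ∀ δ : ℝ, ∫ ξ : ℝ, ((M δ ξ : ℝ) : ℂ) * g ξ =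
        ((m/2 : ℝ) : ℂ) * ∫ ξ : ℝ, (Real.cos ((δ⁻¹ * (a*(t-s))) * ξ) : ℂ) * g ξ := by
      intro δ
      rw [← MeasureTheory.integral_const_mul]
      apply MeasureTheory.integral_congr_ae
      apply Filter.Eventually.of_forall
      intro ξ
      simp only [hMdef]
      push_cast
      ring
    simp only [heq]
    have := hRL.const_mul ((m/2 : ℝ) : ℂ)
    simpa using this
  -- remainder tendsto
  have hrem : Tendsto (fun δ : ℝ => ∫ ξ : ℝ, ((R δ ξ : ℝ) : ℂ) * g ξ) (𝓝[>] (0:ℝ)) (𝓝 0) := by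
    have hmeas : ∀ᶠ δ : ℝ in 𝓝[>] (0:ℝ),
        AEStronglyMeasurable (fun ξ : ℝ => ((R δ ξ : ℝ) : ℂ) * g ξ) volume := by
      apply Filter.Eventually.of_forall
      intro δ
      have : (fun ξ : ℝ => ((R δ ξ : ℝ) : ℂ) * g ξ) =
          fun ξ => ((Efun a t s δ ξ : ℝ) : ℂ) * g ξ - ((M δ ξ : ℝ) : ℂ) * g ξ := by
        funext ξ; rw [hRdef]; push_cast; ring
      rw [this]
      exact (hEm δ).sub (((Complex.continuous_ofReal.comp
        (hMc δ)).aestronglyMeasurable).mul hg.aestronglyMeasurable)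
    have hbound : ∀ᶠ δ : ℝ in 𝓝[>] (0:ℝ), ∀ᵐ ξ : ℝ ∂volume,
        ‖((R δ ξ : ℝ) : ℂ) * g ξ‖ ≤ (3/2 * |m|) * ‖g ξ‖ := by
      filter_upwards [self_mem_nhdsWithin] with δ hδ
      filter_upwards [ae_ne_zero] with ξ hξ
      rw [norm_mul, Complex.norm_real, Real.norm_eq_abs]
      have h1 : |R δ ξ| ≤ 3/2 * |m| := by
        rw [hRdef]
        have h2 : |Efun a t s δ ξ| ≤ |m| :=
          Efun_bound (ne_of_gt ha) (ne_of_gt (Set.mem_Ioi.mp hδ)) hξ t s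
        have h3 : |M δ ξ| ≤ |m| / 2 := by
          rw [hMdef]
          simp only [abs_mul, abs_div, abs_two]
          have := Real.abs_cos_le_one ((δ⁻¹ * (a*(t-s))) * ξ)
          nlinarith [abs_nonneg m, abs_nonneg (Real.cos ((δ⁻¹ * (a*(t-s))) * ξ))]
        calc |Efun a t s δ ξ - M δ ξ| ≤ |Efun a t s δ ξ| + |M δ ξ| := abs_sub _ _
          _ ≤ |m| + |m|/2 := add_le_add h2 h3
          _ = 3/2 * |m| := by ring
      exact mul_le_mul_of_nonneg_right h1 (norm_nonneg _)
    have hlim : ∀ᵐ ξ : ℝ ∂volume,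
        Tendsto (fun δ : ℝ => ((R δ ξ : ℝ) : ℂ) * g ξ) (𝓝[>] (0:ℝ)) (𝓝 0) := by
      filter_upwards [ae_ne_zero] with ξ hξ
      have hR0 : Tendsto (fun δ : ℝ => R δ ξ) (𝓝[>] (0:ℝ)) (𝓝 0) := by
        have hsq : ∀ᶠ δ : ℝ in 𝓝[>] (0:ℝ), ‖R δ ξ‖ ≤ δ * (2 * (4 * a * |ξ|)⁻¹) := by
          filter_upwards [self_mem_nhdsWithin] with δ hδ
          have hδ0 : (0:ℝ) < δ := hδ
          have hξ' : |ξ| ≠ 0 := abs_ne_zero.mpr hξ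
          have hδ' : (δ:ℝ) ≠ 0 := ne_of_gt hδ0
          have ha' : a ≠ 0 := ne_of_gt ha
          have hthis : R δ ξ = (Real.sin (δ⁻¹ * a * |ξ| * (t+s) - 2 * (δ⁻¹ * a * |ξ|) * m)
              - Real.sin (δ⁻¹ * a * |ξ| * (t+s))) * (4 * (δ⁻¹ * a * |ξ|))⁻¹ := by
            simp only [hRdef, hM]
            unfold Efun
            ring
          have h5 : |Real.sin (δ⁻¹ * a * |ξ| * (t+s) - 2 * (δ⁻¹ * a * |ξ|) * m)
              - Real.sin (δ⁻¹ * a * |ξ| * (t+s))| ≤ 2 := by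
            calc _ ≤ |Real.sin _| + |Real.sin _| := abs_sub _ _
              _ ≤ 1 + 1 := add_le_add (Real.abs_sin_le_one _) (Real.abs_sin_le_one _)
              _ = 2 := by norm_num
          have hAeq : (4 * (δ⁻¹ * a * |ξ|))⁻¹ = δ * (4 * a * |ξ|)⁻¹ := by
            field_simp
          calc ‖R δ ξ‖
              = |Real.sin (δ⁻¹ * a * |ξ| * (t+s) - 2 * (δ⁻¹ * a * |ξ|) * m)
                - Real.sin (δ⁻¹ * a * |ξ| * (t+s))| * |(4 * (δ⁻¹ * a * |ξ|))⁻¹| := by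
                rw [Real.norm_eq_abs, hthis, abs_mul]
            _ = |Real.sin (δ⁻¹ * a * |ξ| * (t+s) - 2 * (δ⁻¹ * a * |ξ|) * m)
                - Real.sin (δ⁻¹ * a * |ξ| * (t+s))| * (δ * (4 * a * |ξ|)⁻¹) := by
                rw [abs_of_pos (show (0:ℝ) < (4 * (δ⁻¹ * a * |ξ|))⁻¹ by positivity), hAeq]
            _ ≤ 2 * (δ * (4 * a * |ξ|)⁻¹) :=
                mul_le_mul_of_nonneg_right h5 (by positivity)
            _ = δ * (2 * (4 * a * |ξ|)⁻¹) := by ring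
        have hg0 : Tendsto (fun δ : ℝ => δ * (2 * (4 * a * |ξ|)⁻¹)) (𝓝[>] (0:ℝ)) (𝓝 0) := by
          have h1 : Tendsto (fun δ : ℝ => δ) (𝓝[>] (0:ℝ)) (𝓝 0) :=
            tendsto_id.mono_right nhdsWithin_le_nhds
          have h2 := h1.mul_const (2 * (4 * a * |ξ|)⁻¹)
          simpa using h2
        exact squeeze_zero_norm' hsq hg0
      have := ((Complex.continuous_ofReal.tendsto 0).comp hR0).mul_const (g ξ)
      simpa using this
    have h := MeasureTheory.tendsto_integral_filter_of_dominated_convergence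
      (fun ξ : ℝ => (3/2 * |m|) * ‖g ξ‖) hmeas hbound (hg.norm.const_mul _) hlim
    simpa using h
  -- combine
  have hsplit : ∀ᶠ δ : ℝ in 𝓝[>] (0:ℝ),
      (∫ ξ : ℝ, ((Efun a t s δ ξ : ℝ) : ℂ) * g ξ) =
        (∫ ξ : ℝ, ((M δ ξ : ℝ) : ℂ) * g ξ) + ∫ ξ : ℝ, ((R δ ξ : ℝ) : ℂ) * g ξ := by
    filter_upwards [self_mem_nhdsWithin] with δ hδ
    rw [← MeasureTheory.integral_add (hMint δ) (hRint δ hδ)]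
    apply MeasureTheory.integral_congr_ae
    apply Filter.Eventually.of_forall
    intro ξ
    simp only [hRdef]
    push_cast
    ring
  have := (hmain.add hrem).congr' (hsplit.mono fun δ h => h.symm)
  simpa using this

lemma ae_ne (t : ℝ) : ∀ᵐ s : ℝ ∂(volume : Measure ℝ), s ≠ t := by
  rw [MeasureTheory.ae_iff]
  simp only [not_not, Set.setOf_eq_eq_singleton]
  exact Real.volume_singleton

/-- **Vanishing of the variance of the rescaled observed Fisher information (equation
(4.14), analytic form).** For integrable `g : ℝ → ℂ`, `a > 0`, `T > 0` and
`Φ_δ(t,s) = ∫_ℝ (∫₀^{min(t,s)} sin(δ⁻¹(t−r)a|ξ|) sin(δ⁻¹(s−r)a|ξ|) dr) g(ξ) dξ`,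
we have `∫₀ᵀ ∫₀ᵀ |Φ_δ(t,s)|² ds dt → 0` as `δ → 0⁺`. -/
theorem variance_rescaled_fisher_information_vanishes (g : ℝ → ℂ) (hg : Integrable g)
    (a : ℝ) (ha : 0 < a) (T : ℝ) (hT : 0 < T) :
    Tendsto (fun δ : ℝ =>
        ∫ t in (0 : ℝ)..T, ∫ s in (0 : ℝ)..T,
          ‖∫ ξ : ℝ,
            (((∫ r in (0 : ℝ)..(min t s),
                Real.sin (δ⁻¹ * (t - r) * a * |ξ|) *
                  Real.sin (δ⁻¹ * (s - r) * a * |ξ|)) : ℝ) : ℂ) * g ξ‖ ^ 2)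
      (nhdsWithin 0 (Set.Ioi 0)) (nhds 0) := by
  have hsm := hg.aestronglyMeasurable
  set g' : ℝ → ℂ := hsm.mk g with hg'def
  have hgg' : g =ᵐ[volume] g' := hsm.ae_eq_mk
  have hg'm : StronglyMeasurable g' := hsm.stronglyMeasurable_mk
  have hg' : Integrable g' := hg.congr hgg'
  set C : ℝ := ∫ ξ : ℝ, ‖g' ξ‖ with hC
  have hC0 : (0:ℝ) ≤ C := MeasureTheory.integral_nonneg fun _ => norm_nonneg _
  set Φ : ℝ → ℝ → ℝ → ℂ := fun δ t s => ∫ ξ : ℝ, ((Efun a t s δ ξ : ℝ) : ℂ) * g' ξ with hΦdef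
  have key : ∀ δ : ℝ, 0 < δ → ∀ t s : ℝ,
      (∫ ξ : ℝ, (((∫ r in (0:ℝ)..(min t s),
          Real.sin (δ⁻¹ * (t - r) * a * |ξ|) *
            Real.sin (δ⁻¹ * (s - r) * a * |ξ|)) : ℝ) : ℂ) * g ξ) = Φ δ t s := by
    intro δ hδ t s
    apply MeasureTheory.integral_congr_ae
    filter_upwards [ae_ne_zero, hgg'] with ξ hξ hgξ
    rw [← Efun_eq_integral (ne_of_gt ha) (ne_of_gt hδ) hξ t s, hgξ]
  have hjoint : ∀ δ : ℝ, StronglyMeasurable fun p : ℝ × ℝ => Φ δ p.1 p.2 := by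
    intro δ
    have h1 : StronglyMeasurable fun q : (ℝ × ℝ) × ℝ =>
        ((Efun a q.1.1 q.1.2 δ q.2 : ℝ) : ℂ) * g' q.2 :=
      ((Complex.measurable_ofReal.comp (measurable_Efun a δ)).mul
        (hg'm.measurable.comp measurable_snd)).stronglyMeasurable
    exact h1.integral_prod_right'
  have hΦb : ∀ δ : ℝ, 0 < δ → ∀ t s : ℝ, ‖Φ δ t s‖ ≤ |min t s| * C := by
    intro δ hδ t s
    have hb : ∀ᵐ ξ : ℝ ∂volume,
        ‖((Efun a t s δ ξ : ℝ) : ℂ) * g' ξ‖ ≤ |min t s| * ‖g' ξ‖ := by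
      filter_upwards [ae_ne_zero] with ξ hξ
      rw [norm_mul, Complex.norm_real, Real.norm_eq_abs]
      exact mul_le_mul_of_nonneg_right
        (Efun_bound (ne_of_gt ha) (ne_of_gt hδ) hξ t s) (norm_nonneg _)
    calc ‖Φ δ t s‖ ≤ ∫ ξ : ℝ, |min t s| * ‖g' ξ‖ :=
        MeasureTheory.norm_integral_le_of_norm_le (hg'.norm.const_mul _) hb
      _ = |min t s| * C := MeasureTheory.integral_const_mul _ _
  have hbox : ∀ δ : ℝ, 0 < δ → ∀ t s : ℝ, t ∈ Set.uIoc (0:ℝ) T → s ∈ Set.uIoc (0:ℝ) T →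
      ‖Φ δ t s‖ ≤ T * C := by
    intro δ hδ t s ht hs
    rw [Set.uIoc_of_le hT.le] at ht hs
    refine (hΦb δ hδ t s).trans ?_
    have h1 : |min t s| ≤ T := by
      rw [abs_of_pos (lt_min ht.1 hs.1)]
      exact (min_le_left _ _).trans ht.2
    exact mul_le_mul_of_nonneg_right h1 hC0
  have hpt : ∀ t s : ℝ, t ≠ s →
      Tendsto (fun δ : ℝ => ‖Φ δ t s‖^2) (𝓝[>] (0:ℝ)) (𝓝 0) := by
    intro t s hts
    have h := ((tendsto_F g' hg' a ha t s hts).norm).pow 2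
    simpa using h
  have hinner : ∀ t : ℝ, t ∈ Set.uIoc (0:ℝ) T →
      Tendsto (fun δ : ℝ => ∫ s in (0:ℝ)..T, ‖Φ δ t s‖^2) (𝓝[>] (0:ℝ)) (𝓝 0) := by
    intro t ht
    have h := intervalIntegral.tendsto_integral_filter_of_dominated_convergence
      (μ := volume) (a := 0) (b := T) (l := 𝓝[>] (0:ℝ)) (F := fun δ s => ‖Φ δ t s‖^2)
      (f := fun _ => (0:ℝ)) (bound := fun _ => (T*C)^2) ?_ ?_ ?_ ?_
    · simpa using h
    · apply Filter.Eventually.of_forall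
      intro δ
      have hmc : Measurable fun s : ℝ => ((t, s) : ℝ × ℝ) :=
        measurable_const.prodMk measurable_id
      exact (((hjoint δ).measurable.comp hmc).norm.pow_const 2).aestronglyMeasurable
    · filter_upwards [self_mem_nhdsWithin] with δ hδ
      apply Filter.Eventually.of_forall
      intro s hs
      rw [Real.norm_eq_abs, abs_of_nonneg (by positivity)]
      exact pow_le_pow_left₀ (norm_nonneg _) (hbox δ hδ t s ht hs) 2
    · exact intervalIntegrable_const
    · filter_upwards [ae_ne t] with s hs
      intro _
      exact hpt t s (Ne.symm hs)
  have hF : Tendsto (fun δ : ℝ => ∫ t in (0:ℝ)..T, ∫ s in (0:ℝ)..T, ‖Φ δ t s‖^2)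
      (𝓝[>] (0:ℝ)) (𝓝 0) := by
    have h := intervalIntegral.tendsto_integral_filter_of_dominated_convergence
      (μ := volume) (a := 0) (b := T) (l := 𝓝[>] (0:ℝ))
      (F := fun δ t => ∫ s in (0:ℝ)..T, ‖Φ δ t s‖^2)
      (f := fun _ => (0:ℝ)) (bound := fun _ => (T*C)^2 * T) ?_ ?_ ?_ ?_
    · simpa using h
    · apply Filter.Eventually.of_forall
      intro δ
      have hrew : (fun t => ∫ s in (0:ℝ)..T, ‖Φ δ t s‖^2)
          = fun t => ∫ s, ‖Φ δ t s‖^2 ∂(volume.restrict (Set.Ioc (0:ℝ) T)) :=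
        funext fun t => intervalIntegral.integral_of_le hT.le
      show AEStronglyMeasurable (fun t => ∫ s in (0:ℝ)..T, ‖Φ δ t s‖^2)
        (volume.restrict (Set.uIoc (0:ℝ) T))
      rw [hrew]
      have hsm2 : StronglyMeasurable fun p : ℝ × ℝ => ‖Φ δ p.1 p.2‖^2 :=
        ((hjoint δ).measurable.norm.pow_const 2).stronglyMeasurable
      exact hsm2.integral_prod_right'.aestronglyMeasurable
    · filter_upwards [self_mem_nhdsWithin] with δ hδ
      apply Filter.Eventually.of_forall
      intro t ht
      have h1 := intervalIntegral.norm_integral_le_of_norm_le_const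
        (a := 0) (b := T) (C := (T*C)^2) (f := fun s => ‖Φ δ t s‖^2) ?_
      · calc ‖∫ s in (0:ℝ)..T, ‖Φ δ t s‖^2‖ ≤ (T*C)^2 * |T - 0| := h1
          _ = (T*C)^2 * T := by rw [sub_zero, abs_of_pos hT]
      · intro s hs
        rw [Real.norm_eq_abs, abs_of_nonneg (by positivity)]
        exact pow_le_pow_left₀ (norm_nonneg _) (hbox δ hδ t s ht hs) 2
    · exact intervalIntegrable_const
    · exact Filter.Eventually.of_forall fun t ht => hinner t ht
  refine Tendsto.congr' ?_ hF
  filter_upwards [self_mem_nhdsWithin] with δ hδ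
  simp only [key δ hδ]
end
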